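/- arXiv:1004.2735 — 4 statements merged into one kernel-verified Lean document; each statement's English description precedes it below -/
import Mathlib

section
/- Let T' be a finite tree with exactly 2n leaves, where n ≥ 1, and let 𝓛 denote its set of leaves. Then there exists a vertex v of T' and a bijection α : 𝓛 → 𝓛 such that the collection of unique paths P_{ℓ, α(ℓ)} for ℓ ∈ 𝓛 covers every vertex of T', and every one of these paths contains v. -/
open SimpleGraph Finset

variable {V : Type*}

/-- In a tree, `x` lies on the unique path between `u` and `v` iff
`dist u x + dist x v = dist u v`. -/
def onTreePath (G : SimpleGraph V) (u x v : V) : Prop :=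
  G.dist u x + G.dist x v = G.dist u v

/-- The set of leaves (vertices of degree 1) of a graph. -/
def leafSet (G : SimpleGraph V) [Fintype V] [DecidableRel G.Adj] : Set V :=
  {v : V | G.degree v = 1}

set_option linter.unusedSectionVars false
set_option maxHeartbeats 1000000

section AuxLemmas
variable [DecidableEq V] {G : SimpleGraph V}


private lemma walk_dist_decomp {u w x : V} (hc : G.Connected) (p : G.Walk u w)
    (hp : p.length = G.dist u w) (hx : x ∈ p.support) :
    (p.takeUntil x hx).length = G.dist u x ∧ (p.dropUntil x hx).length = G.dist x w := by
  have h1 : G.dist u x ≤ (p.takeUntil x hx).length := SimpleGraph.dist_le _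
  have h2 : G.dist x w ≤ (p.dropUntil x hx).length := SimpleGraph.dist_le _
  have h3 : (p.takeUntil x hx).length + (p.dropUntil x hx).length = p.length := by
    rw [← SimpleGraph.Walk.length_append, p.take_spec hx]
  have h4 : G.dist u w ≤ G.dist u x + G.dist x w := hc.dist_triangle
  omega

private lemma dir_of_shortest (hc : G.Connected) {a b : V} (p : G.Walk a b)
    (hp : p.length = G.dist a b) (h0 : 0 < p.length) :
    G.Adj a (p.getVert 1) ∧ G.dist (p.getVert 1) b + 1 = G.dist a b := by
  cases p with
  | nil => simp at h0
  | @cons _ c _ h q =>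
    rw [SimpleGraph.Walk.getVert_cons_succ, SimpleGraph.Walk.getVert_zero]
    refine ⟨h, ?_⟩
    have h1 : G.dist c b ≤ q.length := SimpleGraph.dist_le q
    have h2 : G.dist a b ≤ G.dist a c + G.dist c b := hc.dist_triangle
    have h3 : G.dist a c = 1 := SimpleGraph.dist_eq_one_iff_adj.mpr h
    have h4 : q.length + 1 = G.dist a b := by simpa using hp
    omega

private lemma dir_spec (hc : G.Connected) {a b : V} (hab : a ≠ b) :
    ∃ u, G.Adj a u ∧ G.dist u b + 1 = G.dist a b := by
  obtain ⟨p, hp⟩ := (hc a b).exists_walk_length_eq_dist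
  have h0 : 0 < p.length := by
    have := hc.pos_dist_of_ne hab
    omega
  exact ⟨p.getVert 1, dir_of_shortest hc p hp h0⟩

private lemma dir_unique (hc : G.Connected) (ha : G.IsAcyclic) {a b u₁ u₂ : V}
    (h1 : G.Adj a u₁) (d1 : G.dist u₁ b + 1 = G.dist a b)
    (h2 : G.Adj a u₂) (d2 : G.dist u₂ b + 1 = G.dist a b) : u₁ = u₂ := by
  obtain ⟨q₁, hq₁⟩ := (hc u₁ b).exists_walk_length_eq_dist
  obtain ⟨q₂, hq₂⟩ := (hc u₂ b).exists_walk_length_eq_dist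
  have l1 : (SimpleGraph.Walk.cons h1 q₁).length = G.dist a b := by
    simp [hq₁]; omega
  have l2 : (SimpleGraph.Walk.cons h2 q₂).length = G.dist a b := by
    simp [hq₂]; omega
  have p1 := (SimpleGraph.Walk.cons h1 q₁).isPath_of_length_eq_dist l1
  have p2 := (SimpleGraph.Walk.cons h2 q₂).isPath_of_length_eq_dist l2
  have heq := ha.path_unique ⟨_, p1⟩ ⟨_, p2⟩
  have := congrArg (fun r : G.Path a b => (r : G.Walk a b).getVert 1) heq
  simpa [SimpleGraph.Walk.getVert_cons_succ] using this

private lemma getVert_one_takeUntil {a b x : V} (p : G.Walk a b) (hx : x ∈ p.support)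
    (h : 1 ≤ (p.takeUntil x hx).length) : (p.takeUntil x hx).getVert 1 = p.getVert 1 := by
  conv_rhs => rw [← p.take_spec hx]
  rw [SimpleGraph.Walk.getVert_append]
  by_cases h1 : 1 < (p.takeUntil x hx).length
  · simp [h1]
  · have hl : (p.takeUntil x hx).length = 1 := by omega
    rw [if_neg (by omega)]
    rw [hl]
    simp only [Nat.sub_self, SimpleGraph.Walk.getVert_zero]
    conv_lhs => rw [← hl]
    exact (p.takeUntil x hx).getVert_length

private lemma path_length_eq_dist (hc : G.Connected) (ha : G.IsAcyclic) {a b : V}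
    (p : G.Walk a b) (hp : p.IsPath) : p.length = G.dist a b := by
  obtain ⟨s, hs, hsl⟩ := hc.exists_path_of_dist a b
  have heq := ha.path_unique ⟨p, hp⟩ ⟨s, hs⟩
  have := congrArg (fun r : G.Path a b => (r : G.Walk a b).length) heq
  simpa [hsl] using this

private lemma dist_add_of_dir_ne (hc : G.Connected) (ha : G.IsAcyclic)
    {v ℓ ℓ' u u' : V}
    (h1 : G.Adj v u) (d1 : G.dist u ℓ + 1 = G.dist v ℓ)
    (h2 : G.Adj v u') (d2 : G.dist u' ℓ' + 1 = G.dist v ℓ')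
    (hne : u ≠ u') : G.dist ℓ v + G.dist v ℓ' = G.dist ℓ ℓ' := by
  obtain ⟨q, hq⟩ := (hc u ℓ).exists_walk_length_eq_dist
  obtain ⟨q', hq'⟩ := (hc u' ℓ').exists_walk_length_eq_dist
  set p : G.Walk v ℓ := SimpleGraph.Walk.cons h1 q with hpdef
  set p' : G.Walk v ℓ' := SimpleGraph.Walk.cons h2 q' with hpdef'
  have lp : p.length = G.dist v ℓ := by simp [hpdef, hq]; omega
  have lp' : p'.length = G.dist v ℓ' := by simp [hpdef', hq']; omega
  have hp : p.IsPath := p.isPath_of_length_eq_dist lp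
  have hp' : p'.IsPath := p'.isPath_of_length_eq_dist lp'
  have hg1 : p.getVert 1 = u := by simp [hpdef, SimpleGraph.Walk.getVert_cons_succ]
  have hg1' : p'.getVert 1 = u' := by simp [hpdef', SimpleGraph.Walk.getVert_cons_succ]
  -- supports intersect only in v
  have hdisj : ∀ x, x ∈ p.support → x ∈ p'.support → x = v := by
    intro x hxp hxp'
    by_contra hxv
    have hdx : 0 < G.dist v x := hc.pos_dist_of_ne (Ne.symm hxv)
    have ht := (walk_dist_decomp hc p lp hxp).1
    have ht' := (walk_dist_decomp hc p' lp' hxp').1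
    have hd1 := dir_of_shortest hc (p.takeUntil x hxp) ht (by omega)
    have hd2 := dir_of_shortest hc (p'.takeUntil x hxp') ht' (by omega)
    rw [getVert_one_takeUntil p hxp (by omega), hg1] at hd1
    rw [getVert_one_takeUntil p' hxp' (by omega), hg1'] at hd2
    exact hne (dir_unique hc ha hd1.1 hd1.2 hd2.1 hd2.2)
  -- the concatenated walk is a path
  have hW : (p.reverse.append p').IsPath := by
    rw [SimpleGraph.Walk.isPath_def, SimpleGraph.Walk.support_append, List.nodup_append]
    refine ⟨hp.reverse.support_nodup, ?_, ?_⟩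
    · have := hp'.support_nodup
      rw [p'.support_eq_cons] at this
      exact this.of_cons
    · intro x hx y hx' hxy
      subst hxy
      have hxp : x ∈ p.support := by
        rwa [SimpleGraph.Walk.support_reverse, List.mem_reverse] at hx
      have hxp' : x ∈ p'.support := by
        rw [p'.support_eq_cons]
        exact List.mem_cons_of_mem v hx'
      have hxv := hdisj x hxp hxp'
      subst hxv
      have := hp'.support_nodup
      rw [p'.support_eq_cons] at this
      exact (List.nodup_cons.mp this).1 hx'
  have hWl : (p.reverse.append p').length = G.dist ℓ ℓ' :=
    path_length_eq_dist hc ha _ hW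
  rw [SimpleGraph.Walk.length_append, SimpleGraph.Walk.length_reverse] at hWl
  rw [← hWl, lp, lp', SimpleGraph.dist_comm (u := ℓ) (v := v)]

private lemma exists_leaf_beyond [Fintype V] [DecidableRel G.Adj] [Nontrivial V]
    (hT : G.IsTree) (v x : V) :
    ∃ ℓ, G.degree ℓ = 1 ∧ G.dist v x + G.dist x ℓ = G.dist v ℓ := by
  have hc := hT.isConnected
  have ha := hT.IsAcyclic
  set S : Finset V := univ.filter (fun y => G.dist v x + G.dist x y = G.dist v y) with hS
  have hxS : x ∈ S := by simp [hS, SimpleGraph.dist_self]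
  obtain ⟨y, hyS, hymax⟩ := S.exists_max_image (fun y => G.dist v y) ⟨x, hxS⟩
  have hyS' : G.dist v x + G.dist x y = G.dist v y := by
    simpa [hS] using hyS
  refine ⟨y, ?_, hyS'⟩
  by_contra hdeg
  -- find a neighbor z of y with dist v z = dist v y + 1
  have hz : ∃ z, G.Adj y z ∧ G.dist v z = G.dist v y + 1 := by
    by_cases hyv : y = v
    · subst hyv
      obtain ⟨w, hw⟩ := exists_ne y
      obtain ⟨z, hz1, _⟩ := dir_spec hc (Ne.symm hw)
      exact ⟨z, hz1, by simp [SimpleGraph.dist_self,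
        SimpleGraph.dist_eq_one_iff_adj.mpr hz1]⟩
    · have hd : 0 < G.dist v y := hc.pos_dist_of_ne (Ne.symm hyv)
      obtain ⟨w, hw1, hw2⟩ := dir_spec hc hyv
      have hdegpos : 0 < G.degree y := by
        rw [← SimpleGraph.card_neighborFinset_eq_degree]
        exact card_pos.mpr ⟨w, (SimpleGraph.mem_neighborFinset G y w).mpr hw1⟩
      have hdeg2 : 1 < G.degree y := by omega
      rw [← SimpleGraph.card_neighborFinset_eq_degree] at hdeg2
      obtain ⟨z, hzmem, hzw⟩ := (Finset.one_lt_card_iff_nontrivial.mp hdeg2).exists_ne w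
      have hyz : G.Adj y z := (SimpleGraph.mem_neighborFinset G y z).mp hzmem
      refine ⟨z, hyz, ?_⟩
      have hb1 : G.dist v z ≤ G.dist v y + 1 := by
        have := hc.dist_triangle (u := v) (v := y) (w := z)
        have h1 : G.dist y z = 1 := SimpleGraph.dist_eq_one_iff_adj.mpr hyz
        omega
      have hb2 : G.dist v y ≤ G.dist v z + 1 := by
        have := hc.dist_triangle (u := v) (v := z) (w := y)
        have h1 : G.dist z y = 1 := SimpleGraph.dist_eq_one_iff_adj.mpr hyz.symm
        omega
      have heq1 : G.dist v z + 1 ≠ G.dist v y := by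
        intro hcase
        apply hzw
        have hzv : G.dist z v + 1 = G.dist y v := by
          rw [SimpleGraph.dist_comm (u := z), SimpleGraph.dist_comm (u := y)]
          exact hcase
        exact dir_unique hc ha hyz hzv hw1 hw2
      have heq2 : G.dist v z ≠ G.dist v y := by
        intro hcase
        obtain ⟨q, hq⟩ := (hc v z).exists_walk_length_eq_dist
        by_cases hyq : y ∈ q.support
        · obtain ⟨ht, hd'⟩ := walk_dist_decomp hc q hq hyq
          have h5 : G.dist v y + G.dist y z = G.dist v z := by
            have := congrArg₂ (· + ·) ht hd'
            rw [← this, ← SimpleGraph.Walk.length_append, q.take_spec hyq, hq]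
          have h6 : G.dist y z = 1 := SimpleGraph.dist_eq_one_iff_adj.mpr hyz
          omega
        · have hWp : ((SimpleGraph.Walk.cons hyz q.reverse).reverse : G.Walk v y).IsPath := by
            rw [SimpleGraph.Walk.isPath_reverse_iff, SimpleGraph.Walk.cons_isPath_iff]
            refine ⟨(q.isPath_of_length_eq_dist hq).reverse, ?_⟩
            rwa [SimpleGraph.Walk.support_reverse, List.mem_reverse]
          have := path_length_eq_dist hc ha _ hWp
          simp [hq] at this
          omega
      omega
  obtain ⟨z, hyz, hvz⟩ := hz
  have hzS : z ∈ S := by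
    simp only [hS, mem_filter, mem_univ, true_and]
    have h1 : G.dist v z ≤ G.dist v x + G.dist x z := hc.dist_triangle
    have h2 : G.dist x z ≤ G.dist x y + 1 := by
      have := hc.dist_triangle (u := x) (v := y) (w := z)
      have h3 : G.dist y z = 1 := SimpleGraph.dist_eq_one_iff_adj.mpr hyz
      omega
    omega
  have := hymax z hzS
  omega

end AuxLemmas

/-- **Theorem 2.** Let `T'` be a tree with `2n` leaves (`n ≥ 1`). Then there exists a
vertex `v` and a bijection `α : 𝓛 → 𝓛` of the set of leaves such that the path system
`P_{ℓ, α(ℓ)}` (`ℓ ∈ 𝓛`) covers each vertex of `T'` and all of these paths contain `v`. -/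
theorem exists_center_and_pairing [Fintype V] [DecidableEq V]
    (G : SimpleGraph V) [DecidableRel G.Adj] (hT : G.IsTree)
    (n : ℕ) (hn : 1 ≤ n) (hcard : Nat.card (leafSet G) = 2 * n) :
    ∃ v : V, ∃ α : leafSet G → leafSet G, Function.Bijective α ∧
      (∀ x : V, ∃ ℓ : leafSet G, onTreePath G (ℓ : V) x (α ℓ : V)) ∧
      (∀ ℓ : leafSet G, onTreePath G (ℓ : V) v (α ℓ : V)) := by
  classical
  have hc := hT.isConnected
  have ha := hT.IsAcyclic
  have hLcard : Nat.card (leafSet G) = Fintype.card (leafSet G) := Nat.card_eq_fintype_card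
  rw [hLcard] at hcard
  have h2card : 1 < Fintype.card (leafSet G) := by omega
  obtain ⟨a, b, hab⟩ := Fintype.exists_pair_of_one_lt_card h2card
  haveI : Nontrivial V := ⟨⟨a, b, fun h => hab (Subtype.ext h)⟩⟩
  have hmemdeg : ∀ ℓ : leafSet G, G.degree (ℓ : V) = 1 := fun ℓ => ℓ.2
  rcases eq_or_lt_of_le hn with h1 | h2
  -- Case n = 1
  · subst h1
    refine ⟨(a : V), fun ℓ => if ℓ = a then b else a, ?_, ?_, ?_⟩
    · -- bijective
      apply Function.Involutive.bijective
      intro ℓ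
      by_cases hla : ℓ = a
      · subst hla; simp [Ne.symm hab, hab]
      · have hlb : ℓ = b := by
          have hcard3 : ({a, b, ℓ} : Finset (leafSet G)).card ≤ 2 := by
            have := Finset.card_le_univ ({a, b, ℓ} : Finset (leafSet G))
            rw [hcard] at this
            omega
          by_contra hlb
          have : ({a, b, ℓ} : Finset (leafSet G)).card = 3 := by
            rw [Finset.card_insert_of_notMem (by
                simp only [Finset.mem_insert, Finset.mem_singleton, not_or]
                exact ⟨hab, fun h => hla h.symm⟩),
              Finset.card_insert_of_notMem (by
                simp only [Finset.mem_singleton]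
                exact fun h => hlb h.symm),
              Finset.card_singleton]
          omega
        show (if (if ℓ = a then b else a) = a then b else a) = ℓ
        rw [if_neg hla, if_pos rfl]
        exact hlb.symm
    · -- cover
      intro x
      obtain ⟨m, hm, hmx⟩ := exists_leaf_beyond hT (a : V) x
      by_cases hma : (⟨m, hm⟩ : leafSet G) = a
      · have hxa : x = (a : V) := by
          have hmav : m = (a : V) := congrArg Subtype.val hma
          rw [hmav, SimpleGraph.dist_self] at hmx
          have : G.dist (a : V) x = 0 := by omega
          exact ((hc.dist_eq_zero_iff).mp this).symm
        refine ⟨a, ?_⟩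
        simp only [if_pos rfl]
        subst hxa
        simp [onTreePath, SimpleGraph.dist_self]
      · -- m = b
        have hmb : (⟨m, hm⟩ : leafSet G) = b := by
          have hcard3 : ({a, b, (⟨m, hm⟩ : leafSet G)} : Finset (leafSet G)).card ≤ 2 := by
            have := Finset.card_le_univ ({a, b, ⟨m, hm⟩} : Finset (leafSet G))
            rw [hcard] at this
            omega
          by_contra hmb
          have : ({a, b, (⟨m, hm⟩ : leafSet G)} : Finset (leafSet G)).card = 3 := by
            rw [Finset.card_insert_of_notMem (by
                simp only [Finset.mem_insert, Finset.mem_singleton, not_or]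
                exact ⟨hab, fun h => hma h.symm⟩),
              Finset.card_insert_of_notMem (by
                simp only [Finset.mem_singleton]
                exact fun h => hmb h.symm),
              Finset.card_singleton]
          omega
        refine ⟨a, ?_⟩
        simp only [if_pos rfl]
        have : m = (b : V) := congrArg Subtype.val hmb
        rw [this] at hmx
        exact hmx
    · -- all paths through a
      intro ℓ
      by_cases hla : ℓ = a
      · subst hla; simp [onTreePath, SimpleGraph.dist_self]
      · simp only [if_neg hla]
        simp [onTreePath, SimpleGraph.dist_self]
  -- Case 2 ≤ n
  · set f : V → ℕ := fun w => ∑ ℓ : leafSet G, G.dist w (ℓ : V) with hf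
    obtain ⟨v, -, hvmin⟩ := Finset.exists_min_image (univ : Finset V) f ⟨a, mem_univ _⟩
    -- v is not a leaf
    have hvnotleaf : G.degree v ≠ 1 := by
      intro hv
      obtain ⟨u, hu⟩ := Finset.card_eq_one.mp
        ((SimpleGraph.card_neighborFinset_eq_degree G v).trans hv)
      have huadj : G.Adj v u := by
        have : u ∈ G.neighborFinset v := by rw [hu]; exact mem_singleton_self u
        exact (SimpleGraph.mem_neighborFinset G v u).mp this
      have hunique : ∀ ℓ : leafSet G, (ℓ : V) ≠ v → G.dist u (ℓ : V) + 1 = G.dist v (ℓ : V) := by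
        intro ℓ hℓv
        obtain ⟨u₀, hu₀, hd₀⟩ := dir_spec hc (Ne.symm hℓv)
        have : u₀ ∈ G.neighborFinset v := (SimpleGraph.mem_neighborFinset G v u₀).mpr hu₀
        rw [hu, mem_singleton] at this
        rwa [this] at hd₀
      set vL : leafSet G := ⟨v, hv⟩ with hvL
      have hsum1 : ∑ ℓ ∈ (univ : Finset (leafSet G)).erase vL, G.dist v (ℓ : V)
          = ∑ ℓ ∈ (univ : Finset (leafSet G)).erase vL, (G.dist u (ℓ : V) + 1) := by
        apply Finset.sum_congr rfl
        intro ℓ hℓ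
        have hℓv : (ℓ : V) ≠ v := fun h =>
          (Finset.mem_erase.mp hℓ).1 (Subtype.ext h)
        exact (hunique ℓ hℓv).symm
      rw [Finset.sum_add_distrib, Finset.sum_const, smul_eq_mul, mul_one] at hsum1
      have hce : ((univ : Finset (leafSet G)).erase vL).card = 2 * n - 1 := by
        rw [Finset.card_erase_of_mem (mem_univ _), Finset.card_univ, hcard]
      have hfv : f v = ∑ ℓ ∈ (univ : Finset (leafSet G)).erase vL, G.dist v (ℓ : V) := by
        show (∑ ℓ : leafSet G, G.dist v (ℓ : V)) = _
        rw [← Finset.sum_erase_add _ _ (mem_univ vL)]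
        simp [hvL, SimpleGraph.dist_self]
      have hfu : f u = ∑ ℓ ∈ (univ : Finset (leafSet G)).erase vL, G.dist u (ℓ : V) + 1 := by
        show (∑ ℓ : leafSet G, G.dist u (ℓ : V)) = _
        rw [← Finset.sum_erase_add _ _ (mem_univ vL)]
        have : G.dist u (vL : V) = 1 := SimpleGraph.dist_eq_one_iff_adj.mpr huadj.symm
        rw [this]
      have hmin := hvmin u (mem_univ u)
      rw [hfv, hfu, hsum1, hce] at hmin
      omega
    -- direction function on leaves
    have hdir : ∀ ℓ : leafSet G, ∃ u, G.Adj v u ∧ G.dist u (ℓ : V) + 1 = G.dist v (ℓ : V) := by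
      intro ℓ
      have : v ≠ (ℓ : V) := fun h => hvnotleaf (h ▸ hmemdeg ℓ)
      exact dir_spec hc this
    choose φ hφadj hφd using hdir
    -- fiber bound
    have hfiber : ∀ u : V, ((univ : Finset (leafSet G)).filter (fun ℓ => φ ℓ = u)).card ≤ n := by
      intro u
      by_contra hcon
      push_neg at hcon
      set F := (univ : Finset (leafSet G)).filter (fun ℓ => φ ℓ = u) with hF
      set Fc := (univ : Finset (leafSet G)).filter (fun ℓ => ¬ φ ℓ = u) with hFc
      have hsplit : F.card + Fc.card = 2 * n := by
        rw [hF, hFc, Finset.card_filter_add_card_filter_not, Finset.card_univ, hcard]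
      have huadj : G.Adj v u := by
        obtain ⟨ℓ₀, hℓ₀⟩ : F.Nonempty := Finset.card_pos.mp (by omega)
        have := hφadj ℓ₀
        rwa [(Finset.mem_filter.mp hℓ₀).2] at this
      have hA : ∑ ℓ ∈ F, G.dist u (ℓ : V) + F.card = ∑ ℓ ∈ F, G.dist v (ℓ : V) := by
        have h0 : ∑ ℓ ∈ F, (G.dist u (ℓ : V) + 1) = ∑ ℓ ∈ F, G.dist v (ℓ : V) := by
          apply Finset.sum_congr rfl
          intro ℓ hℓ
          have := hφd ℓ
          rwa [(Finset.mem_filter.mp hℓ).2] at this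
        rw [Finset.sum_add_distrib, Finset.sum_const, smul_eq_mul, mul_one] at h0
        exact h0
      have hB : ∑ ℓ ∈ Fc, G.dist u (ℓ : V) ≤ ∑ ℓ ∈ Fc, G.dist v (ℓ : V) + Fc.card := by
        have h0 : ∑ ℓ ∈ Fc, G.dist u (ℓ : V) ≤ ∑ ℓ ∈ Fc, (G.dist v (ℓ : V) + 1) := by
          apply Finset.sum_le_sum
          intro ℓ hℓ
          have h3 : G.dist u v = 1 := SimpleGraph.dist_eq_one_iff_adj.mpr huadj.symm
          have := hc.dist_triangle (u := u) (v := v) (w := (ℓ : V))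
          omega
        rw [Finset.sum_add_distrib, Finset.sum_const, smul_eq_mul, mul_one] at h0
        exact h0
      have hfu : f u = ∑ ℓ ∈ F, G.dist u (ℓ : V) + ∑ ℓ ∈ Fc, G.dist u (ℓ : V) := by
        rw [hf, hF, hFc, Finset.sum_filter_add_sum_filter_not]
      have hfv : f v = ∑ ℓ ∈ F, G.dist v (ℓ : V) + ∑ ℓ ∈ Fc, G.dist v (ℓ : V) := by
        rw [hf, hF, hFc, Finset.sum_filter_add_sum_filter_not]
      have hmin := hvmin u (mem_univ u)
      omega
    -- Hall's condition
    set t : leafSet G → Finset (leafSet G) :=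
      fun ℓ => (univ : Finset (leafSet G)).filter (fun ℓ' => φ ℓ' ≠ φ ℓ) with ht
    have hall : ∀ S : Finset (leafSet G), S.card ≤ (S.biUnion t).card := by
      intro S
      rcases S.eq_empty_or_nonempty with rfl | ⟨ℓ₀, hℓ₀⟩
      · simp
      by_cases hsame : ∀ ℓ ∈ S, φ ℓ = φ ℓ₀
      · have hsub : S ⊆ (univ : Finset (leafSet G)).filter (fun ℓ => φ ℓ = φ ℓ₀) := by
          intro ℓ hℓ
          exact Finset.mem_filter.mpr ⟨mem_univ _, hsame ℓ hℓ⟩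
        have h1 : S.card ≤ n := le_trans (Finset.card_le_card hsub) (hfiber _)
        have hsplit : ((univ : Finset (leafSet G)).filter (fun ℓ => φ ℓ = φ ℓ₀)).card
            + (t ℓ₀).card = 2 * n := by
          rw [ht]
          rw [← Finset.card_univ (α := leafSet G), ← hcard] at *
          exact Finset.card_filter_add_card_filter_not (fun ℓ => φ ℓ = φ ℓ₀)
        have h2 : n ≤ (t ℓ₀).card := by
          have := hfiber (φ ℓ₀)
          omega
        calc S.card ≤ n := h1
          _ ≤ (t ℓ₀).card := h2
          _ ≤ (S.biUnion t).card :=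
            Finset.card_le_card (Finset.subset_biUnion_of_mem t hℓ₀)
      · push_neg at hsame
        obtain ⟨ℓ₁, hℓ₁, hne⟩ := hsame
        have huniv : (univ : Finset (leafSet G)) ⊆ S.biUnion t := by
          intro ℓ' _
          rw [Finset.mem_biUnion]
          by_cases hℓ' : φ ℓ' = φ ℓ₀
          · exact ⟨ℓ₁, hℓ₁, Finset.mem_filter.mpr ⟨mem_univ _, by rw [hℓ']; exact hne.symm⟩⟩
          · exact ⟨ℓ₀, hℓ₀, Finset.mem_filter.mpr ⟨mem_univ _, hℓ'⟩⟩
        exact le_trans (Finset.card_le_card (Finset.subset_univ S))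
          (Finset.card_le_card huniv)
    obtain ⟨α, hinj, hmem⟩ := (Finset.all_card_le_biUnion_card_iff_exists_injective t).mp hall
    have hbij : Function.Bijective α := Finite.injective_iff_bijective.mp hinj
    have hpair : ∀ ℓ : leafSet G, onTreePath G (ℓ : V) v (α ℓ : V) := by
      intro ℓ
      have hmem' := hmem ℓ
      rw [ht, Finset.mem_filter] at hmem'
      exact dist_add_of_dir_ne hc ha (hφadj ℓ) (hφd ℓ) (hφadj (α ℓ)) (hφd (α ℓ))
        (Ne.symm hmem'.2)
    refine ⟨v, α, hbij, ?_, hpair⟩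
    intro x
    obtain ⟨m, hm, hmx⟩ := exists_leaf_beyond hT v x
    obtain ⟨ℓ, hℓ⟩ := hbij.surjective ⟨m, hm⟩
    refine ⟨ℓ, ?_⟩
    have hp := hpair ℓ
    rw [hℓ] at hp
    unfold onTreePath at hp ⊢
    rw [hℓ]
    simp only at hp hmx ⊢
    have t1 : G.dist (ℓ : V) x ≤ G.dist (ℓ : V) v + G.dist v x := hc.dist_triangle
    have t2 : G.dist (ℓ : V) m ≤ G.dist (ℓ : V) x + G.dist x m := hc.dist_triangle
    omega
end

section
/- Let T' be a finite tree with exactly 2n leaves, n ≥ 1, and let 𝓛 denote its set of leaves. Then for every balanced vertex v of T' there exists a bijection α : 𝓛 → 𝓛 such that the collection of unique paths P_{ℓ, α(ℓ)} for ℓ ∈ 𝓛 covers every edge of T', and every one of these paths contains v. -/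
open SimpleGraph Finset

variable {V : Type*}

variable [Fintype V] [DecidableEq V]

/-- The set of edges incident to `v`, as a finset. -/
def incEdges (G : SimpleGraph V) [DecidableRel G.Adj] (v : V) : Finset (Sym2 V) :=
  G.edgeFinset.filter (fun e => v ∈ e)

open Classical in
/-- `δ(v,e)`: the number of leaves `ℓ` such that the unique path from `v` to `ℓ`
contains the edge `e` (i.e. both endpoints of `e` lie on that path). -/
noncomputable def treeDelta (G : SimpleGraph V) [DecidableRel G.Adj] (v : V) (e : Sym2 V) : ℕ :=
  (Finset.univ.filter fun ℓ : V =>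
    G.degree ℓ = 1 ∧ ∀ x ∈ e, onTreePath G v x ℓ).card

/-- A vertex `v` is balanced if for every edge `e` incident to `v`,
`δ(v,e) ≤ Σ { δ(v,f) : f ∈ E(v), f ≠ e }`. -/
def IsBalanced (G : SimpleGraph V) [DecidableRel G.Adj] (v : V) : Prop :=
  ∀ e ∈ incEdges G v, treeDelta G v e ≤ ∑ f ∈ (incEdges G v).erase e, treeDelta G v f

section Aux
set_option linter.unusedVariables false
variable {V : Type*} [DecidableEq V] {G : SimpleGraph V}

/-- lemma 1 -/
lemma aux_dist_add_le {a b x : V} (p : G.Walk a b) (hx : x ∈ p.support) :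
    G.dist a x + G.dist x b ≤ p.length := by
  have hs := p.take_spec hx
  calc G.dist a x + G.dist x b ≤ (p.takeUntil x hx).length + (p.dropUntil x hx).length :=
        Nat.add_le_add (SimpleGraph.dist_le _) (SimpleGraph.dist_le _)
    _ = p.length := by rw [← SimpleGraph.Walk.length_append, hs]

/-- lemma 2 : in a tree, every path realizes the distance -/
lemma aux_path_len (hT : G.IsTree) {a b : V} (p : G.Walk a b) (hp : p.IsPath) :
    p.length = G.dist a b := by
  obtain ⟨q, hq, hql⟩ := hT.isConnected.exists_path_of_dist a b
  have := (hT.existsUnique_path a b).unique hp hq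
  rw [this, hql]

/-- lemma 3 -/
lemma aux_onPath (hT : G.IsTree) {a b x : V} (p : G.Walk a b) (hp : p.IsPath)
    (hx : x ∈ p.support) : G.dist a x + G.dist x b = G.dist a b := by
  have h1 := aux_dist_add_le p hx
  rw [aux_path_len hT p hp] at h1
  exact le_antisymm h1 (hT.isConnected.dist_triangle)

set_option linter.unusedSectionVars false

/-- spec of the second vertex of a path out of `v` -/
lemma aux_getVert1 (hT : G.IsTree) {v ℓ : V} (p : G.Walk v ℓ) (hp : p.IsPath)
    (hne : v ≠ ℓ) :
    G.Adj v (p.getVert 1) ∧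
      G.dist v (p.getVert 1) + G.dist (p.getVert 1) ℓ = G.dist v ℓ := by
  have hlen := aux_path_len hT p hp
  cases p with
  | nil => exact absurd rfl hne
  | @cons _ u _ h q =>
    have hq : q.IsPath := hp.of_cons
    rw [SimpleGraph.Walk.getVert_cons_succ, SimpleGraph.Walk.getVert_zero]
    refine ⟨h, ?_⟩
    have hd1 : G.dist v u = 1 := SimpleGraph.dist_eq_one_iff_adj.mpr h
    have hql : q.length = G.dist u ℓ := aux_path_len hT q hq
    have htri : G.dist v ℓ ≤ G.dist v u + G.dist u ℓ := hT.isConnected.dist_triangle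
    simp only [SimpleGraph.Walk.length_cons] at hlen
    omega

/-- existence and uniqueness of the branch neighbor -/
lemma aux_branch (hT : G.IsTree) {v ℓ : V} (hne : v ≠ ℓ) :
    ∃! u : V, G.Adj v u ∧ G.dist v u + G.dist u ℓ = G.dist v ℓ := by
  obtain ⟨p, hp, hpl⟩ := hT.isConnected.exists_path_of_dist v ℓ
  refine ⟨p.getVert 1, aux_getVert1 hT p hp hne, ?_⟩
  rintro u ⟨hadj, hdist⟩
  have hd1 : G.dist v u = 1 := SimpleGraph.dist_eq_one_iff_adj.mpr hadj
  have hdvl : 1 ≤ G.dist v ℓ := by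
    have := hT.isConnected.dist_triangle (u := v) (v := u) (w := ℓ)
    omega
  obtain ⟨r, hr, hrl⟩ := hT.isConnected.exists_path_of_dist u ℓ
  have hvr : v ∉ r.support := by
    intro hvr
    have := aux_dist_add_le r hvr
    rw [hrl] at this
    have : G.dist u v = 1 := by rw [SimpleGraph.dist_comm]; exact hd1
    omega
  have hcons : (SimpleGraph.Walk.cons hadj r).IsPath :=
    SimpleGraph.Walk.IsPath.cons hr hvr
  have := (hT.existsUnique_path v ℓ).unique hcons hp
  have hgv : p.getVert 1 = u := by
    rw [← this, SimpleGraph.Walk.getVert_cons_succ, SimpleGraph.Walk.getVert_zero]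
  rw [hgv]

/-- second vertex agreement along prefixes -/
lemma aux_getVert1_takeUntil (hT : G.IsTree) {v ℓ x : V} (p : G.Walk v ℓ)
    (hx : x ∈ p.support) (hvx : v ≠ x) :
    (p.takeUntil x hx).getVert 1 = p.getVert 1 := by
  have hs := p.take_spec hx
  have hlen : 1 ≤ (p.takeUntil x hx).length := by
    by_contra hcon
    push_neg at hcon
    interval_cases h : (p.takeUntil x hx).length
    · exact hvx (SimpleGraph.Walk.eq_of_length_eq_zero h)
  conv_rhs => rw [← hs]
  rw [SimpleGraph.Walk.getVert_append]
  rcases Nat.lt_or_ge 1 (p.takeUntil x hx).length with h | h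
  · simp [h]
  · have h1 : (p.takeUntil x hx).length = 1 := le_antisymm h hlen
    rw [if_neg (by omega)]
    rw [h1]
    simp only [Nat.sub_self, SimpleGraph.Walk.getVert_zero]
    conv_lhs => rw [← h1]
    rw [SimpleGraph.Walk.getVert_length]

/-- cross-branch distance additivity -/
lemma aux_cross (hT : G.IsTree) {v ℓ₁ ℓ₂ u₁ u₂ : V}
    (h₁ : G.Adj v u₁ ∧ G.dist v u₁ + G.dist u₁ ℓ₁ = G.dist v ℓ₁)
    (h₂ : G.Adj v u₂ ∧ G.dist v u₂ + G.dist u₂ ℓ₂ = G.dist v ℓ₂)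
    (hne : u₁ ≠ u₂) :
    G.dist ℓ₁ v + G.dist v ℓ₂ = G.dist ℓ₁ ℓ₂ := by
  obtain ⟨p₁, hp₁, hl₁⟩ := hT.isConnected.exists_path_of_dist v ℓ₁
  obtain ⟨p₂, hp₂, hl₂⟩ := hT.isConnected.exists_path_of_dist v ℓ₂
  have hne₁ : v ≠ ℓ₁ := by
    rintro rfl
    have := SimpleGraph.dist_eq_one_iff_adj.mpr h₁.1
    have h0 : G.dist v v = 0 := SimpleGraph.dist_self (G := G) (v := v)
    omega
  have hne₂ : v ≠ ℓ₂ := by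
    rintro rfl
    have := SimpleGraph.dist_eq_one_iff_adj.mpr h₂.1
    have h0 : G.dist v v = 0 := SimpleGraph.dist_self (G := G) (v := v)
    omega
  have hg₁ : p₁.getVert 1 = u₁ :=
    (aux_branch hT hne₁).unique (aux_getVert1 hT p₁ hp₁ hne₁) h₁
  have hg₂ : p₂.getVert 1 = u₂ :=
    (aux_branch hT hne₂).unique (aux_getVert1 hT p₂ hp₂ hne₂) h₂
  -- supports intersect only in v
  have hint : ∀ x, x ∈ p₁.support → x ∈ p₂.support → x = v := by
    intro x hx1 hx2
    by_contra hxv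
    have hvx : v ≠ x := fun h => hxv h.symm
    have ht : p₁.takeUntil x hx1 = p₂.takeUntil x hx2 :=
      (hT.existsUnique_path v x).unique (hp₁.takeUntil hx1) (hp₂.takeUntil hx2)
    have : p₁.getVert 1 = p₂.getVert 1 := by
      rw [← aux_getVert1_takeUntil hT p₁ hx1 hvx, ← aux_getVert1_takeUntil hT p₂ hx2 hvx, ht]
    rw [hg₁, hg₂] at this
    exact hne this
  -- the concatenated walk is a path
  have hw : (p₁.reverse.append p₂).IsPath := by
    rw [SimpleGraph.Walk.isPath_def, SimpleGraph.Walk.support_append,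
      SimpleGraph.Walk.support_reverse]
    refine List.Nodup.append ?_ ?_ ?_
    · exact List.nodup_reverse.mpr hp₁.support_nodup
    · exact List.Nodup.of_cons (by rw [← SimpleGraph.Walk.support_eq_cons]; exact hp₂.support_nodup)
    · intro x hx1 hx2
      have hx1' : x ∈ p₁.support := List.mem_reverse.mp hx1
      have hx2' : x ∈ p₂.support := List.mem_of_mem_tail hx2
      have hxv := hint x hx1' hx2'
      subst hxv
      have : p₂.support.Nodup := hp₂.support_nodup
      rw [SimpleGraph.Walk.support_eq_cons] at this
      exact (List.nodup_cons.mp this).1 hx2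
  have hlw := aux_path_len hT _ hw
  rw [SimpleGraph.Walk.length_append, SimpleGraph.Walk.length_reverse, hl₁, hl₂] at hlw
  rw [← hlw, SimpleGraph.dist_comm (u := v) (v := ℓ₁)]

/-- step lemma: an edge, seen from `v`, goes either up or down -/
lemma aux_step (hT : G.IsTree) (v : V) {a b : V} (hab : G.Adj a b) :
    (G.dist v a + G.dist a b = G.dist v b ∧ G.dist v b = G.dist v a + 1) ∨
    (G.dist v b + G.dist b a = G.dist v a ∧ G.dist v a = G.dist v b + 1) := by
  obtain ⟨p, hp, hpl⟩ := hT.isConnected.exists_path_of_dist v a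
  have hd1 : G.dist a b = 1 := SimpleGraph.dist_eq_one_iff_adj.mpr hab
  have hd1' : G.dist b a = 1 := by rw [SimpleGraph.dist_comm]; exact hd1
  by_cases hb : b ∈ p.support
  · right
    have := aux_onPath hT p hp hb
    constructor
    · rw [hd1']
      omega
    · rw [hd1'] at this
      omega
  · left
    have hcat : (p.concat hab).IsPath := by
      rw [SimpleGraph.Walk.isPath_def, SimpleGraph.Walk.concat_eq_append,
        SimpleGraph.Walk.support_append]
      refine List.Nodup.append hp.support_nodup ?_ ?_
      · simp
      · intro x hx1 hx2
        simp only [SimpleGraph.Walk.support_cons, SimpleGraph.Walk.support_nil,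
          List.tail_cons, List.mem_singleton] at hx2
        subst hx2
        exact hb hx1
    have hlen := aux_path_len hT _ hcat
    rw [SimpleGraph.Walk.length_concat, hpl] at hlen
    have ha : a ∈ (p.concat hab).support := by
      rw [SimpleGraph.Walk.concat_eq_append]
      exact (SimpleGraph.Walk.mem_support_append_iff _ _).mpr (Or.inl p.end_mem_support)
    have := aux_onPath hT _ hcat ha
    constructor
    · omega
    · omega

lemma aux_trans (hT : G.IsTree) {v x ℓ u : V}
    (h1 : G.dist v x + G.dist x ℓ = G.dist v ℓ)
    (h2 : G.dist v ℓ + G.dist ℓ u = G.dist v u) :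
    G.dist v x + G.dist x u = G.dist v u := by
  have t1 : G.dist x u ≤ G.dist x ℓ + G.dist ℓ u := hT.isConnected.dist_triangle
  have t2 : G.dist v u ≤ G.dist v x + G.dist x u := hT.isConnected.dist_triangle
  omega

lemma aux_cover' [Fintype V] [DecidableRel G.Adj] (hT : G.IsTree) (v : V) {a b : V}
    (hab : G.Adj a b)
    (h : G.dist v a + G.dist a b = G.dist v b ∧ G.dist v b = G.dist v a + 1) :
    ∃ ℓ, G.degree ℓ = 1 ∧ (G.dist v a + G.dist a ℓ = G.dist v ℓ) ∧
      (G.dist v b + G.dist b ℓ = G.dist v ℓ) := by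
  classical
  set S : Finset V := Finset.univ.filter
    (fun w => G.dist v a + G.dist a w = G.dist v w ∧ G.dist v b + G.dist b w = G.dist v w)
    with hS
  have hbS : b ∈ S := by
    simp only [hS, Finset.mem_filter, Finset.mem_univ, true_and]
    refine ⟨h.1, ?_⟩
    rw [SimpleGraph.dist_self (G := G) (v := b)]
    omega
  obtain ⟨ℓ, hℓS, hmax⟩ := S.exists_max_image (fun w => G.dist v w) ⟨b, hbS⟩
  simp only [hS, Finset.mem_filter, Finset.mem_univ, true_and] at hℓS
  refine ⟨ℓ, ?_, hℓS.1, hℓS.2⟩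
  have hd1 : G.dist a b = 1 := SimpleGraph.dist_eq_one_iff_adj.mpr hab
  have hℓv : ℓ ≠ v := by
    rintro rfl
    have h0 : G.dist ℓ ℓ = 0 := SimpleGraph.dist_self (G := G) (v := ℓ)
    have := hℓS.2
    omega
  -- every neighbor of ℓ is the branch vertex towards v
  obtain ⟨u₀, hu₀, huniq⟩ := aux_branch hT hℓv
  have hnbr : ∀ u, G.Adj ℓ u → u = u₀ := by
    intro u hu
    refine huniq u ⟨hu, ?_⟩
    rcases aux_step hT v hu with hc | hc
    · -- u is further from v : contradicts maximality
      exfalso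
      have huS : u ∈ S := by
        simp only [hS, Finset.mem_filter, Finset.mem_univ, true_and]
        exact ⟨aux_trans hT hℓS.1 hc.1, aux_trans hT hℓS.2 hc.1⟩
      have := hmax u huS
      omega
    · rw [SimpleGraph.dist_comm (u := ℓ) (v := u), SimpleGraph.dist_comm (u := u) (v := v),
        SimpleGraph.dist_comm (u := ℓ) (v := v)]
      have := hc.1
      omega
  -- ℓ has at least one neighbor
  obtain ⟨p, hp, hpl⟩ := hT.isConnected.exists_path_of_dist ℓ v
  have hadj : ∃ w, G.Adj ℓ w := by
    cases p with
    | nil => exact absurd rfl hℓv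
    | cons h q => exact ⟨_, h⟩
  have hpos : 0 < G.degree ℓ := (G.degree_pos_iff_exists_adj ℓ).mpr hadj
  have hle : G.degree ℓ ≤ 1 := by
    have hsub : G.neighborFinset ℓ ⊆ {u₀} := by
      intro u hu
      rw [SimpleGraph.mem_neighborFinset] at hu
      rw [Finset.mem_singleton]
      exact hnbr u hu
    calc G.degree ℓ = (G.neighborFinset ℓ).card := rfl
      _ ≤ ({u₀} : Finset V).card := Finset.card_le_card hsub
      _ = 1 := Finset.card_singleton u₀
  omega

lemma aux_cover [Fintype V] [DecidableRel G.Adj] (hT : G.IsTree) (v : V) {e : Sym2 V}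
    (he : e ∈ G.edgeSet) :
    ∃ ℓ, G.degree ℓ = 1 ∧ ∀ x ∈ e, G.dist v x + G.dist x ℓ = G.dist v ℓ := by
  induction e with
  | _ a b =>
    rw [SimpleGraph.mem_edgeSet] at he
    rcases aux_step hT v he with h | h
    · obtain ⟨ℓ, h1, h2, h3⟩ := aux_cover' hT v he h
      refine ⟨ℓ, h1, ?_⟩
      intro x hx
      rcases Sym2.mem_iff.mp hx with rfl | rfl
      · exact h2
      · exact h3
    · obtain ⟨ℓ, h1, h2, h3⟩ := aux_cover' hT v he.symm h
      refine ⟨ℓ, h1, ?_⟩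
      intro x hx
      rcases Sym2.mem_iff.mp hx with rfl | rfl
      · exact h3
      · exact h2

end Aux

/-- **Lemma 2.** Let `T'` be a tree with `2n` leaves (`n ≥ 1`). Then for every balanced
vertex `v` there exists a bijection `α` of the set of leaves such that the paths
`P_{ℓ, α(ℓ)}` cover all edges of `T'` and all of these paths contain `v`. -/
theorem balanced_vertex_pairing (G : SimpleGraph V) [DecidableRel G.Adj] (hT : G.IsTree)
    (n : ℕ) (hn : 1 ≤ n) (hcard : Nat.card (leafSet G) = 2 * n)
    (v : V) (hv : IsBalanced G v) :
    ∃ α : leafSet G → leafSet G, Function.Bijective α ∧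
      (∀ e ∈ G.edgeSet, ∃ ℓ : leafSet G, ∀ x ∈ e, onTreePath G (ℓ : V) x (α ℓ : V)) ∧
      (∀ ℓ : leafSet G, onTreePath G (ℓ : V) v (α ℓ : V)) := by
  classical
  -- the leaf set as a finset
  set LF : Finset V := Finset.univ.filter (fun x => G.degree x = 1) with hLFdef
  have hsetLF : leafSet G = ↑LF := by
    ext x; simp [leafSet, hLFdef]
  have hLF : LF.card = 2 * n := by
    rw [hsetLF, Nat.card_coe_set_eq, Set.ncard_coe_finset] at hcard
    exact hcard
  -- incidence edges as an image
  have hinc : incEdges G v = (G.neighborFinset v).image (fun u => s(v, u)) := by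
    ext e
    constructor
    · intro he
      rw [incEdges, Finset.mem_filter] at he
      obtain ⟨he1, he2⟩ := he
      rw [SimpleGraph.mem_edgeFinset] at he1
      induction e with
      | _ x y =>
        rw [Finset.mem_image]
        rw [SimpleGraph.mem_edgeSet] at he1
        rcases Sym2.mem_iff.mp he2 with rfl | rfl
        · exact ⟨y, (G.mem_neighborFinset _ _).mpr he1, rfl⟩
        · exact ⟨x, (G.mem_neighborFinset _ _).mpr he1.symm, Sym2.eq_swap⟩
    · intro he
      rw [Finset.mem_image] at he
      obtain ⟨u, hu, rfl⟩ := he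
      rw [SimpleGraph.mem_neighborFinset] at hu
      rw [incEdges, Finset.mem_filter, SimpleGraph.mem_edgeFinset]
      exact ⟨hu, Sym2.mem_mk_left v u⟩
  -- v is not a leaf
  have hvleaf : G.degree v ≠ 1 := by
    intro hdeg
    have hcard1 : (incEdges G v).card = 1 := by
      rw [hinc, Finset.card_image_of_injOn (fun a _ b _ hab => Sym2.congr_right.mp hab)]
      rw [SimpleGraph.card_neighborFinset_eq_degree, hdeg]
    obtain ⟨e₀, he₀⟩ := Finset.card_eq_one.mp hcard1
    have he₀mem : e₀ ∈ incEdges G v := by rw [he₀]; exact Finset.mem_singleton_self e₀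
    have he₀edge : e₀ ∈ G.edgeSet := by
      have := (Finset.mem_filter.mp (by rw [incEdges] at he₀mem; exact he₀mem)).1
      rwa [SimpleGraph.mem_edgeFinset] at this
    obtain ⟨ℓ, hℓ1, hℓ2⟩ := aux_cover hT v he₀edge
    have hpos : 0 < treeDelta G v e₀ := by
      rw [treeDelta]
      rw [Finset.card_pos]
      refine ⟨ℓ, ?_⟩
      rw [Finset.mem_filter]
      exact ⟨Finset.mem_univ ℓ, hℓ1, fun x hx => hℓ2 x hx⟩
    have := hv e₀ he₀mem
    rw [he₀, Finset.erase_singleton, Finset.sum_empty] at this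
    omega
  -- leaves are distinct from v
  have hnev : ∀ ℓ : V, G.degree ℓ = 1 → v ≠ ℓ := by
    intro ℓ hℓ h
    exact hvleaf (h ▸ hℓ)
  -- the branch function
  have hbr : ∀ ℓ : V, G.degree ℓ = 1 →
      ∃! u : V, G.Adj v u ∧ G.dist v u + G.dist u ℓ = G.dist v ℓ :=
    fun ℓ hℓ => aux_branch hT (hnev ℓ hℓ)
  set cl : V → V := fun ℓ =>
    if h : G.degree ℓ = 1 then (hbr ℓ h).exists.choose else v with hcldef
  have hcl : ∀ ℓ : V, G.degree ℓ = 1 →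
      G.Adj v (cl ℓ) ∧ G.dist v (cl ℓ) + G.dist (cl ℓ) ℓ = G.dist v ℓ := by
    intro ℓ hℓ
    rw [hcldef]
    simp only [hℓ, dif_pos]
    exact (hbr ℓ hℓ).exists.choose_spec
  have hcluniq : ∀ ℓ : V, G.degree ℓ = 1 → ∀ u : V,
      G.Adj v u ∧ G.dist v u + G.dist u ℓ = G.dist v ℓ → u = cl ℓ := by
    intro ℓ hℓ u hu
    exact ((hbr ℓ hℓ).unique hu (hcl ℓ hℓ))
  -- treeDelta equals the fiber cardinality
  have hdelta : ∀ u : V, G.Adj v u →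
      treeDelta G v s(v, u) = (LF.filter (fun ℓ => cl ℓ = u)).card := by
    intro u hu
    rw [treeDelta]
    congr 1
    ext ℓ
    simp only [Finset.mem_filter, Finset.mem_univ, true_and, hLFdef]
    constructor
    · rintro ⟨h1, h2⟩
      refine ⟨h1, ?_⟩
      have := h2 u (Sym2.mem_mk_right v u)
      exact (hcluniq ℓ h1 u ⟨hu, this⟩).symm
    · rintro ⟨h1, rfl⟩
      refine ⟨h1, ?_⟩
      intro x hx
      rcases Sym2.mem_iff.mp hx with rfl | rfl
      · show G.dist x x + G.dist x ℓ = G.dist x ℓ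
        rw [SimpleGraph.dist_self (G := G)]
        omega
      · exact (hcl ℓ h1).2
  -- the sum of treeDeltas over incident edges is the number of leaves
  have hsum : ∑ f ∈ incEdges G v, treeDelta G v f = 2 * n := by
    rw [hinc, Finset.sum_image (fun a _ b _ hab => Sym2.congr_right.mp hab)]
    rw [← hLF]
    rw [Finset.sum_congr rfl (fun u hu => hdelta u ((G.mem_neighborFinset _ _).mp hu))]
    exact (Finset.card_eq_sum_card_fiberwise
      (fun ℓ hℓ => (G.mem_neighborFinset _ _).mpr
        (hcl ℓ (by simpa [hLFdef] using hℓ)).1)).symm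
  -- each fiber has at most n elements
  have hfiber : ∀ ℓ : V, G.degree ℓ = 1 → (LF.filter (fun x => cl x = cl ℓ)).card ≤ n := by
    intro ℓ hℓ
    have hadj : G.Adj v (cl ℓ) := (hcl ℓ hℓ).1
    have hemem : s(v, cl ℓ) ∈ incEdges G v := by
      rw [incEdges, Finset.mem_filter, SimpleGraph.mem_edgeFinset, SimpleGraph.mem_edgeSet]
      exact ⟨hadj, Sym2.mem_mk_left v (cl ℓ)⟩
    have h1 := hv s(v, cl ℓ) hemem
    have h2 := Finset.add_sum_erase (incEdges G v) (treeDelta G v) hemem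
    rw [hsum] at h2
    rw [hdelta (cl ℓ) hadj] at h1 h2
    omega
  -- a linear order on V
  letI : LinearOrder V := LinearOrder.lift' (fun x => (Fintype.equivFin V) x)
    (Fintype.equivFin V).injective
  -- sort the leaves by their branch
  set φ : V → Lex (V × V) := fun x => toLex (cl x, x) with hφdef
  have hφinj : Function.Injective φ := by
    intro a b hab
    have := congrArg (fun p => (ofLex p).2) hab
    simpa [hφdef] using this
  set L' : Finset (Lex (V × V)) := LF.image φ with hL'def
  have hL' : L'.card = 2 * n := by
    rw [hL'def, Finset.card_image_of_injective _ hφinj, hLF]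
  set oi := L'.orderIsoOfFin hL' with hoidef
  set g : Fin (2 * n) → V := fun i => (ofLex (oi i).1).2 with hgdef
  have hgspec : ∀ i, g i ∈ LF ∧ φ (g i) = (oi i).1 := by
    intro i
    obtain ⟨x, hx, hφx⟩ := Finset.mem_image.mp (oi i).2
    have hgx : g i = x := by
      show (ofLex ((oi i : L') : Lex (V × V))).2 = x
      rw [← hφx]
      rfl
    constructor
    · rw [hgx]; exact hx
    · rw [hgx, hφx]
  have hgleaf : ∀ i, G.degree (g i) = 1 := by
    intro i
    have := (hgspec i).1
    rw [hLFdef, Finset.mem_filter] at this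
    exact this.2
  have hginj : Function.Injective g := by
    intro i j hij
    have : φ (g i) = φ (g j) := by rw [hij]
    rw [(hgspec i).2, (hgspec j).2] at this
    exact (oi.injective (Subtype.ext this))
  have hgmono : ∀ i j : Fin (2 * n), i ≤ j → cl (g i) ≤ cl (g j) := by
    intro i j hij
    have h1 : (oi i : L') ≤ oi j := oi.monotone hij
    have h2 : ((oi i : L') : Lex (V × V)) ≤ (oi j : L') := h1
    rw [← (hgspec i).2, ← (hgspec j).2] at h2
    rw [hφdef] at h2
    rcases Prod.Lex.le_iff.mp h2 with h | h
    · exact le_of_lt h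
    · exact le_of_eq h.1
  -- the key combinatorial claim
  have hkey : ∀ (a b : ℕ) (ha : a < 2 * n) (hb : b < 2 * n), a + n = b →
      cl (g ⟨a, ha⟩) ≠ cl (g ⟨b, hb⟩) := by
    intro a b ha hb hab heq
    have hconst : ∀ k (hk : a ≤ k) (hk' : k ≤ b), cl (g ⟨k, by omega⟩) = cl (g ⟨a, ha⟩) := by
      intro k hk hk'
      have h1 : cl (g ⟨a, ha⟩) ≤ cl (g ⟨k, by omega⟩) := hgmono _ _ hk
      have h2 : cl (g ⟨k, by omega⟩) ≤ cl (g ⟨b, hb⟩) := hgmono _ _ hk'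
      rw [← heq] at h2
      exact le_antisymm h2 h1
    have hcardle : (Finset.Icc a b).card ≤ (LF.filter (fun x => cl x = cl (g ⟨a, ha⟩))).card := by
      apply Finset.card_le_card_of_injOn (fun k => if h : k < 2 * n then g ⟨k, h⟩ else v)
      · intro k hk
        rw [Finset.mem_coe, Finset.mem_Icc] at hk
        have hklt : k < 2 * n := by omega
        beta_reduce; rw [dif_pos hklt, Finset.mem_coe, Finset.mem_filter]
        exact ⟨(hgspec ⟨k, hklt⟩).1, hconst k hk.1 hk.2⟩
      · intro k hk k' hk' hkk'
        simp only [Finset.coe_Icc, Set.mem_Icc] at hk hk'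
        have h1 : k < 2 * n := by omega
        have h2 : k' < 2 * n := by omega
        simp only [dif_pos h1, dif_pos h2] at hkk'
        have := hginj hkk'
        exact congrArg Fin.val this
    rw [Nat.card_Icc] at hcardle
    have := hfiber (g ⟨a, ha⟩) (hgleaf _)
    omega
  -- assemble the bijection
  haveI : NeZero (2 * n) := ⟨by omega⟩
  haveI : Fintype (leafSet G) := Fintype.ofFinite _
  have hmemLS : ∀ x : V, x ∈ leafSet G ↔ G.degree x = 1 := fun x => Iff.rfl
  have hcardLS : Fintype.card (leafSet G) = 2 * n := by
    rw [← Nat.card_eq_fintype_card]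
    exact hcard
  set f : Fin (2 * n) → leafSet G := fun i => ⟨g i, (hmemLS _).mpr (hgleaf i)⟩ with hfdef
  have hfbij : Function.Bijective f := by
    rw [Fintype.bijective_iff_injective_and_card]
    constructor
    · intro i j hij
      exact hginj (congrArg Subtype.val hij)
    · rw [hcardLS, Fintype.card_fin]
  set eL : Fin (2 * n) ≃ leafSet G := Equiv.ofBijective f hfbij with heLdef
  set nn : Fin (2 * n) := ⟨n, by omega⟩ with hnndef
  set α : leafSet G → leafSet G := fun ℓ => eL ((Equiv.addRight nn) (eL.symm ℓ)) with hαdef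
  have hαbij : Function.Bijective α :=
    (eL.symm.trans ((Equiv.addRight nn).trans eL)).bijective
  -- the branch of α ℓ differs from the branch of ℓ
  have hdiff : ∀ ℓ : leafSet G, cl ((α ℓ : V)) ≠ cl ((ℓ : V)) := by
    intro ℓ
    set i := eL.symm ℓ with hidef
    have hℓ : (ℓ : V) = g i := by
      have : eL i = ℓ := by rw [hidef]; exact eL.apply_symm_apply ℓ
      rw [← this, heLdef]
      rfl
    have hα : (α ℓ : V) = g (i + nn) := by
      rw [hαdef]
      rfl
    rw [hℓ, hα]
    have hval : ((i + nn : Fin (2 * n))).val = (i.val + n) % (2 * n) := by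
      rw [Fin.val_add, hnndef]
    rcases Nat.lt_or_ge (i.val + n) (2 * n) with hlt | hge
    · have hv2 : ((i + nn : Fin (2 * n))).val = i.val + n := by
        rw [hval, Nat.mod_eq_of_lt hlt]
      have := hkey i.val (i.val + n) i.isLt (by omega) rfl
      intro hcon
      apply this
      have e1 : (⟨i.val, i.isLt⟩ : Fin (2 * n)) = i := rfl
      have e2 : (⟨i.val + n, by omega⟩ : Fin (2 * n)) = i + nn := by
        apply Fin.ext; simp [hv2]
      rw [e1, e2]
      exact hcon.symm
    · have hv2 : ((i + nn : Fin (2 * n))).val = i.val + n - 2 * n := by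
        rw [hval]
        have h1 : i.val + n < 2 * (2 * n) := by have := i.isLt; omega
        have := Nat.sub_lt_left_of_lt_add (by omega) (show i.val + n < 2*n + 2*n by omega)
        rw [Nat.mod_eq_sub_mod hge, Nat.mod_eq_of_lt (by omega)]
      have hkey2 := hkey (i.val + n - 2 * n) i.val (by omega) i.isLt (by omega)
      intro hcon
      apply hkey2
      have e1 : (⟨i.val, i.isLt⟩ : Fin (2 * n)) = i := rfl
      have e2 : (⟨i.val + n - 2 * n, by omega⟩ : Fin (2 * n)) = i + nn := by
        apply Fin.ext; simp [hv2]
      rw [e1, e2]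
      exact hcon
  -- all the paths pass through v
  have hthrough : ∀ ℓ : leafSet G, G.dist (ℓ : V) v + G.dist v (α ℓ : V)
      = G.dist (ℓ : V) (α ℓ : V) := by
    intro ℓ
    have h1 : G.degree (ℓ : V) = 1 := (hmemLS _).mp ℓ.2
    have h2 : G.degree (α ℓ : V) = 1 := (hmemLS _).mp (α ℓ).2
    exact aux_cross hT (hcl _ h1) (hcl _ h2) (fun h => hdiff ℓ h.symm)
  refine ⟨α, hαbij, ?_, ?_⟩
  · -- coverage
    intro e he
    obtain ⟨ℓ₀, hdeg, hprop⟩ := aux_cover hT v he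
    set ℓ : leafSet G := ⟨ℓ₀, (hmemLS _).mpr hdeg⟩ with hℓdef
    refine ⟨ℓ, ?_⟩
    intro x hx
    have h1 := hprop x hx
    have h2 : G.dist ℓ₀ v + G.dist v (α ℓ : V) = G.dist ℓ₀ (α ℓ : V) := hthrough ℓ
    have hc1 : G.dist v x = G.dist x v := SimpleGraph.dist_comm
    have hc2 : G.dist x ℓ₀ = G.dist ℓ₀ x := SimpleGraph.dist_comm
    have hc3 : G.dist v ℓ₀ = G.dist ℓ₀ v := SimpleGraph.dist_comm
    have t1 : G.dist x (α ℓ : V) ≤ G.dist x v + G.dist v (α ℓ : V) :=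
      hT.isConnected.dist_triangle
    have t2 : G.dist ℓ₀ (α ℓ : V) ≤ G.dist ℓ₀ x + G.dist x (α ℓ : V) :=
      hT.isConnected.dist_triangle
    show G.dist ℓ₀ x + G.dist x (α ℓ : V) = G.dist ℓ₀ (α ℓ : V)
    omega
  · -- through v
    intro ℓ
    exact hthrough ℓ
end

section
/- Let T' be a finite tree and let 𝒫 be a finite nonempty family of paths in T' such that no two paths of 𝒫 are vertex-disjoint (every two paths of the family share at least one vertex). Then all paths in 𝒫 share a common vertex. -/
open SimpleGraph Finset

variable {V : Type*}

namespace HellyAux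

variable {G : SimpleGraph V}

/-- Any vertex on a shortest walk is "between" the endpoints. -/
lemma between_of_mem_support {u v x : V} {w : G.Walk u v}
    (hw : w.length = G.dist u v) (hx : x ∈ w.support) :
    G.dist u x + G.dist x v = G.dist u v := by
  classical
  have hsplit := w.take_spec hx
  have hlen : (w.takeUntil x hx).length + (w.dropUntil x hx).length = G.dist u v := by
    rw [← SimpleGraph.Walk.length_append, hsplit, hw]
  have h1 := SimpleGraph.dist_le (w.takeUntil x hx)
  have h2 := SimpleGraph.dist_le (w.dropUntil x hx)
  obtain ⟨s1, hs1⟩ := (SimpleGraph.Walk.reachable (w.takeUntil x hx)).exists_walk_length_eq_dist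
  obtain ⟨s2, hs2⟩ := (SimpleGraph.Walk.reachable (w.dropUntil x hx)).exists_walk_length_eq_dist
  have htri := SimpleGraph.dist_le (s1.append s2)
  rw [SimpleGraph.Walk.length_append, hs1, hs2] at htri
  omega

/-- In a tree, any path is a shortest walk. -/
lemma length_eq_dist_of_isPath (hT : G.IsTree) {u v : V} {w : G.Walk u v}
    (hw : w.IsPath) : w.length = G.dist u v := by
  obtain ⟨p, hp, hpl⟩ := hT.isConnected.exists_path_of_dist u v
  rwa [(hT.existsUnique_path u v).unique hw hp]

/-- Ordering on a geodesic: if `y` and `z` both lie between `r` and `x`, and `y` is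
closer to `r`, then `z` lies between `y` and `x`. -/
lemma between_order (hT : G.IsTree) {r x y z : V}
    (hy : G.dist r y + G.dist y x = G.dist r x)
    (hz : G.dist r z + G.dist z x = G.dist r x)
    (hle : G.dist r y ≤ G.dist r z) :
    G.dist y z + G.dist z x = G.dist y x := by
  classical
  have hc := hT.isConnected
  obtain ⟨a1, ha1⟩ := hc.exists_walk_length_eq_dist r y
  obtain ⟨a2, ha2⟩ := hc.exists_walk_length_eq_dist y x
  obtain ⟨b1, hb1⟩ := hc.exists_walk_length_eq_dist r z
  obtain ⟨b2, hb2⟩ := hc.exists_walk_length_eq_dist z x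
  have hw1 : (a1.append a2).length = G.dist r x := by
    rw [SimpleGraph.Walk.length_append, ha1, ha2, hy]
  have hw2 : (b1.append b2).length = G.dist r x := by
    rw [SimpleGraph.Walk.length_append, hb1, hb2, hz]
  have hp1 := (a1.append a2).isPath_of_length_eq_dist hw1
  have hp2 := (b1.append b2).isPath_of_length_eq_dist hw2
  have heq : a1.append a2 = b1.append b2 := (hT.existsUnique_path r x).unique hp1 hp2
  have hzmem : z ∈ (a1.append a2).support := by
    rw [heq, SimpleGraph.Walk.mem_support_append_iff]
    exact Or.inl (SimpleGraph.Walk.end_mem_support b1)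
  rw [SimpleGraph.Walk.mem_support_append_iff] at hzmem
  rcases hzmem with hz1 | hz2
  · have h := between_of_mem_support ha1 hz1
    have hzy : G.dist z y = 0 := by omega
    have : z = y := (hc.dist_eq_zero_iff).mp hzy
    subst this
    simp [SimpleGraph.dist_self]
  · exact between_of_mem_support ha2 hz2

lemma isPath_append {u m v : V} {p : G.Walk u m} {q : G.Walk m v}
    (hp : p.IsPath) (hq : q.IsPath) (hd : ∀ y ∈ p.support, y ∈ q.support → y = m) :
    (p.append q).IsPath := by
  rw [SimpleGraph.Walk.isPath_def, SimpleGraph.Walk.support_append]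
  refine List.Nodup.append hp.support_nodup (hq.support_nodup.tail) ?_
  intro y hyp hyt
  have hyq : y ∈ q.support := by
    rw [q.support_eq_cons]; exact List.mem_cons_of_mem _ hyt
  have : y = m := hd y hyp hyq
  subst this
  have := hq.support_nodup
  rw [q.support_eq_cons] at this
  exact (List.nodup_cons.mp this).1 hyt

/-- First vertex on a walk satisfying a predicate, with the decomposition. -/
lemma exists_first {u v : V} (w : G.Walk u v) (S : V → Prop) [DecidablePred S] (hv : S v) :
    ∃ (m : V) (w1 : G.Walk u m) (w2 : G.Walk m v),
      w = w1.append w2 ∧ S m ∧ ∀ y ∈ w1.support, S y → y = m := by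
  induction w with
  | nil => exact ⟨_, .nil, .nil, rfl, hv, by simp⟩
  | @cons a b c h p ih =>
    by_cases ha : S a
    · exact ⟨a, .nil, .cons h p, rfl, ha, by simp⟩
    · obtain ⟨m, w1, w2, heq, hm, hfirst⟩ := ih hv
      refine ⟨m, .cons h w1, w2, by rw [SimpleGraph.Walk.cons_append, heq], hm, ?_⟩
      intro y hy hSy
      rw [SimpleGraph.Walk.support_cons] at hy
      rcases List.mem_cons.mp hy with rfl | hy'
      · exact absurd hSy ha
      · exact hfirst y hy' hSy

/-- Median of three vertices in a tree. -/
lemma exists_median (hT : G.IsTree) (r a b : V) :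
    ∃ m, G.dist a m + G.dist m b = G.dist a b ∧
      G.dist a m + G.dist m r = G.dist a r ∧
      G.dist b m + G.dist m r = G.dist b r := by
  classical
  have hc := hT.isConnected
  obtain ⟨p, hp_len⟩ := hc.exists_walk_length_eq_dist a b
  obtain ⟨q, hq_len⟩ := hc.exists_walk_length_eq_dist r a
  obtain ⟨m, w1, w2, heq, hm, hfirst⟩ :=
    exists_first q (· ∈ p.support) p.start_mem_support
  have hlen : w1.length + w2.length = G.dist r a := by
    rw [← SimpleGraph.Walk.length_append, ← heq, hq_len]
  have h1 := SimpleGraph.dist_le w1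
  have h2 := SimpleGraph.dist_le w2
  have htri : G.dist r a ≤ G.dist r m + G.dist m a := hc.dist_triangle
  have hrm : w1.length = G.dist r m := by omega
  have hma : w2.length = G.dist m a := by omega
  have hamb : G.dist a m + G.dist m b = G.dist a b := between_of_mem_support hp_len hm
  refine ⟨m, hamb, ?_, ?_⟩
  · have d1 : G.dist m r = G.dist r m := SimpleGraph.dist_comm ..
    have d2 : G.dist a m = G.dist m a := SimpleGraph.dist_comm ..
    have d3 : G.dist a r = G.dist r a := SimpleGraph.dist_comm ..
    omega
  · -- build path from r to b through m
    have hsplit := p.take_spec hm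
    have hplen : (p.takeUntil m hm).length + (p.dropUntil m hm).length = G.dist a b := by
      rw [← SimpleGraph.Walk.length_append, hsplit, hp_len]
    have h3 := SimpleGraph.dist_le (p.takeUntil m hm)
    have h4 := SimpleGraph.dist_le (p.dropUntil m hm)
    have hmb : (p.dropUntil m hm).length = G.dist m b := by omega
    have hqp : q.IsPath := q.isPath_of_length_eq_dist hq_len
    have hw1p : w1.IsPath := by
      rw [heq] at hqp; exact hqp.of_append_left
    have hpp : p.IsPath := p.isPath_of_length_eq_dist hp_len
    have hp2p : (p.dropUntil m hm).IsPath := hpp.dropUntil hm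
    have htp : (w1.append (p.dropUntil m hm)).IsPath := by
      refine isPath_append hw1p hp2p ?_
      intro y hy1 hy2
      exact hfirst y hy1 (p.support_dropUntil_subset hm hy2)
    have hlen2 := length_eq_dist_of_isPath hT htp
    rw [SimpleGraph.Walk.length_append, hrm, hmb] at hlen2
    have c1 : G.dist b m = G.dist m b := SimpleGraph.dist_comm ..
    have c2 : G.dist m r = G.dist r m := SimpleGraph.dist_comm ..
    have c3 : G.dist b r = G.dist r b := SimpleGraph.dist_comm ..
    omega

/-- Gate (projection) of `r` onto the path from `a` to `b`. -/
lemma exists_gate (hT : G.IsTree) (r a b : V) :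
    ∃ m, G.dist a m + G.dist m b = G.dist a b ∧
      ∀ x, G.dist a x + G.dist x b = G.dist a b →
        G.dist r m + G.dist m x = G.dist r x := by
  have hc := hT.isConnected
  obtain ⟨m, h1, h2, h3⟩ := exists_median hT r a b
  refine ⟨m, h1, fun x hx => ?_⟩
  have tri1 : G.dist r x ≤ G.dist r m + G.dist m x := hc.dist_triangle
  by_cases hcase : G.dist a x ≤ G.dist a m
  · have h4 := between_order hT hx h1 hcase
    have tri2 : G.dist a r ≤ G.dist a x + G.dist x r := hc.dist_triangle
    have c1 : G.dist x m = G.dist m x := SimpleGraph.dist_comm ..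
    have c2 : G.dist m r = G.dist r m := SimpleGraph.dist_comm ..
    have c3 : G.dist x r = G.dist r x := SimpleGraph.dist_comm ..
    omega
  · have hle : G.dist a m ≤ G.dist a x := le_of_not_ge hcase
    have h4 := between_order hT h1 hx hle
    have tri2 : G.dist b r ≤ G.dist b x + G.dist x r := hc.dist_triangle
    have c1 : G.dist x b = G.dist b x := SimpleGraph.dist_comm ..
    have c2 : G.dist m r = G.dist r m := SimpleGraph.dist_comm ..
    have c3 : G.dist x r = G.dist r x := SimpleGraph.dist_comm ..
    have c4 : G.dist b m = G.dist m b := SimpleGraph.dist_comm ..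
    omega

end HellyAux

/-- **Helly property for paths in trees (Gyárfás–Lehel).** If a finite nonempty family of
paths in a tree contains no two vertex-disjoint paths, then all the paths share a common
vertex. Each path is given by its (ordered) pair of endpoints, and its vertex set is
the set of vertices on the unique path between them. -/
theorem paths_common_vertex [Fintype V] (G : SimpleGraph V) (hT : G.IsTree)
    (P : Finset (V × V)) (hne : P.Nonempty)
    (hint : ∀ p ∈ P, ∀ q ∈ P,
      ∃ x : V, onTreePath G p.1 x p.2 ∧ onTreePath G q.1 x q.2) :
    ∃ v : V, ∀ p ∈ P, onTreePath G p.1 v p.2 := by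
  classical
  simp only [onTreePath] at *
  have hc := hT.isConnected
  obtain ⟨p₀, hp₀⟩ := hne
  set r := p₀.1 with hr
  choose g hg1 hg2 using fun p : V × V => HellyAux.exists_gate hT r p.1 p.2
  obtain ⟨p1, hp1P, hmax⟩ := P.exists_max_image (fun p => G.dist r (g p)) ⟨p₀, hp₀⟩
  refine ⟨g p1, fun q hq => ?_⟩
  obtain ⟨x, hx1, hxq⟩ := hint p1 hp1P q hq
  have h1 : G.dist r (g p1) + G.dist (g p1) x = G.dist r x := hg2 p1 x hx1
  have h2 : G.dist r (g q) + G.dist (g q) x = G.dist r x := hg2 q x hxq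
  have hle : G.dist r (g q) ≤ G.dist r (g p1) := hmax q hq
  have h3 := HellyAux.between_order hT h2 h1 hle
  have hgq := hg1 q
  have tri1 : G.dist q.1 (g p1) ≤ G.dist q.1 (g q) + G.dist (g q) (g p1) := hc.dist_triangle
  have tri2 : G.dist (g p1) q.2 ≤ G.dist (g p1) x + G.dist x q.2 := hc.dist_triangle
  have tri3 : G.dist q.1 q.2 ≤ G.dist q.1 (g p1) + G.dist (g p1) q.2 := hc.dist_triangle
  by_cases hcase : G.dist q.1 (g q) ≤ G.dist q.1 x
  · have h4 := HellyAux.between_order hT hgq hxq hcase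
    omega
  · have hle2 : G.dist q.1 x ≤ G.dist q.1 (g q) := le_of_not_ge hcase
    have h4 := HellyAux.between_order hT hxq hgq hle2
    -- mirrored: work from the q.2 side
    have tri4 : G.dist q.2 (g p1) ≤ G.dist q.2 (g q) + G.dist (g q) (g p1) := hc.dist_triangle
    have tri5 : G.dist (g p1) q.1 ≤ G.dist (g p1) x + G.dist x q.1 := hc.dist_triangle
    have c1 : G.dist q.2 (g q) = G.dist (g q) q.2 := SimpleGraph.dist_comm ..
    have c2 : G.dist (g p1) q.1 = G.dist q.1 (g p1) := SimpleGraph.dist_comm ..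
    have c3 : G.dist x q.1 = G.dist q.1 x := SimpleGraph.dist_comm ..
    have c4 : G.dist q.2 (g p1) = G.dist (g p1) q.2 := SimpleGraph.dist_comm ..
    have c5 : G.dist x (g q) = G.dist (g q) x := SimpleGraph.dist_comm ..
    omega
end

section
/- Let T be a white–grey tree with w white leaves whose root has exactly two neighbors: one a grey leaf (so g = 1) and the other a branching vertex. Suppose w is odd and no white leaf of T is short. Then cost(T) = w + ⌈g/2⌉ = w + 1. -/
open SimpleGraph Finset

/-- Colors of vertices in a white–grey tree. -/
inductive WGColor : Type
  | white
  | grey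
  | uncolored
  deriving DecidableEq

/-- A white–grey tree: a finite rooted tree with vertices colored white, grey or uncolored,
whose root is uncolored, whose grey vertices are all children (neighbors) of the root,
whose leaves that are not children of the root are white, and whose uncolored vertices
other than the root are branching points (degree at least 3). -/
structure WGTree : Type 1 where
  V : Type
  [fintypeV : Fintype V]
  [decEqV : DecidableEq V]
  G : SimpleGraph V
  [decAdj : DecidableRel G.Adj]
  isTree : G.IsTree
  root : V
  color : V → WGColor
  root_uncolored : color root = WGColor.uncolored
  grey_adj_root : ∀ v : V, color v = WGColor.grey → G.Adj root v
  leaf_white : ∀ v : V, G.degree v = 1 → ¬ G.Adj root v → color v = WGColor.white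
  uncolored_branching : ∀ v : V, color v = WGColor.uncolored → v ≠ root → 3 ≤ G.degree v

attribute [instance] WGTree.fintypeV WGTree.decEqV WGTree.decAdj

namespace WGTree

variable (T : WGTree)

/-- `x` lies on the unique path between `u` and `v` (in a tree this is the
standard metric characterization). -/
def onPath (u x v : T.V) : Prop := T.G.dist u x + T.G.dist x v = T.G.dist u v

/-- The vertex set of the unique path whose (unordered) pair of endpoints is `p`. -/
def pathVerts (p : Sym2 T.V) : Set T.V := {x | ∃ u v : T.V, p = s(u, v) ∧ T.onPath u x v}

/-- A vertex is colored if it is white or grey. -/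
def Colored (v : T.V) : Prop := T.color v ≠ WGColor.uncolored

open Classical in
/-- The cost of a path (given by its endpoint pair): 1 for a short path (a single vertex)
or a grey path (both endpoints grey), and 2 otherwise (a long path). -/
noncomputable def pathCost (p : Sym2 T.V) : ℕ :=
  if p.IsDiag then 1 else if ∀ x ∈ p, T.color x = WGColor.grey then 1 else 2

/-- The cost of a path system is the sum of the costs of its paths. -/
noncomputable def coverCost (P : Finset (Sym2 T.V)) : ℕ := ∑ p ∈ P, T.pathCost p

/-- `P` is a colored cover of the subtree induced on the vertex set `W`:
every path lies in `W`, every path has colored endpoints, and every colored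
vertex of `W` lies on some path. -/
def IsCoverOn (W : Set T.V) (P : Finset (Sym2 T.V)) : Prop :=
  (∀ p ∈ P, T.pathVerts p ⊆ W) ∧
  (∀ p ∈ P, ∀ x ∈ p, T.Colored x) ∧
  (∀ v ∈ W, T.Colored v → ∃ p ∈ P, v ∈ T.pathVerts p)

/-- The minimum cost of a colored cover of the subtree induced on `W`. -/
noncomputable def costOn (W : Set T.V) : ℕ :=
  sInf {c : ℕ | ∃ P : Finset (Sym2 T.V), T.IsCoverOn W P ∧ T.coverCost P = c}

/-- The minimum cost of a colored cover of the whole white–grey tree. -/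
noncomputable def cost : ℕ := T.costOn Set.univ

/-- An optimal colored cover of the subtree induced on `W`. -/
def IsOptimalCoverOn (W : Set T.V) (P : Finset (Sym2 T.V)) : Prop :=
  T.IsCoverOn W P ∧ T.coverCost P = T.costOn W

/-- A grey leaf. -/
def isGreyLeaf (v : T.V) : Prop := T.color v = WGColor.grey ∧ T.G.degree v = 1

open Classical in
/-- The number of grey leaves. -/
noncomputable def greyLeafCount : ℕ := (Finset.univ.filter fun v => T.isGreyLeaf v).card

open Classical in
/-- The number of white leaves. -/
noncomputable def whiteLeafCount : ℕ :=
  (Finset.univ.filter fun v : T.V => T.color v = WGColor.white ∧ T.G.degree v = 1).card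

open Classical in
/-- The number of neighbors of the root that are not grey leaves, i.e. the degree
the root would have after deleting all grey leaves. -/
noncomputable def rootReducedDegree : ℕ :=
  ((T.G.neighborFinset T.root).filter fun v => ¬ T.isGreyLeaf v).card

/-- The vertex set of the subtree `T_w` obtained by deleting all grey leaves
(and the root, if it would thereby become a leaf). -/
def Ww : Set T.V := {v | ¬ T.isGreyLeaf v ∧ (v = T.root → T.rootReducedDegree ≠ 1)}

open Classical in
/-- The degree of `v` inside the subtree induced on `W`. -/
noncomputable def degOn (W : Set T.V) (v : T.V) : ℕ :=
  ((T.G.neighborFinset v).filter fun u => u ∈ W).card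

/-- `v` is a short leaf of the subtree induced on `W`: a leaf adjacent to a
branching vertex (a vertex with at least three neighbors) of that subtree. -/
def IsShortLeafOn (W : Set T.V) (v : T.V) : Prop :=
  v ∈ W ∧ T.degOn W v = 1 ∧ ∃ u ∈ W, T.G.Adj v u ∧ 3 ≤ T.degOn W u

/-- The subtree induced on `W` has a short leaf. -/
def HasShortLeafOn (W : Set T.V) : Prop := ∃ v, T.IsShortLeafOn W v

/-- A branching vertex: at least three neighbors. -/
def Branching (v : T.V) : Prop := 3 ≤ T.G.degree v

/-- A dangerous vertex: when exactly one child of the root is not a grey leaf,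
the colored vertices between the root and the first branching point. -/
def Dangerous (x : T.V) : Prop :=
  T.rootReducedDegree = 1 ∧ T.Colored x ∧ ¬ T.isGreyLeaf x ∧ ¬ T.Branching x ∧
  ∀ b : T.V, b ≠ T.root → T.Branching b → T.onPath T.root x b

/-- A mixed path: it contains at least two colored vertices and exactly one of
its colored vertices is a grey leaf. -/
def IsMixed (p : Sym2 T.V) : Prop :=
  (∃ x ∈ T.pathVerts p, ∃ y ∈ T.pathVerts p, x ≠ y ∧ T.Colored x ∧ T.Colored y) ∧
  (∃! g : T.V, g ∈ T.pathVerts p ∧ T.isGreyLeaf g)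

/-- `q` is the (nonempty) trace of the path `p` on `T_w`: the restriction of `p`
to the vertices of `T_w`, with the initial uncolored vertices deleted; equivalently,
the subpath of `p ∩ T_w` spanned by the colored vertices of `p ∩ T_w`. -/
def IsTraceOf (q p : Sym2 T.V) : Prop :=
  (∀ x ∈ q, x ∈ T.pathVerts p ∩ T.Ww ∧ T.Colored x) ∧
  T.pathVerts q ⊆ T.pathVerts p ∩ T.Ww ∧
  (∀ x ∈ T.pathVerts p ∩ T.Ww, T.Colored x → x ∈ T.pathVerts q)

/-- The trace of `p` on `T_w` is empty. -/
def HasEmptyTrace (p : Sym2 T.V) : Prop := ∀ x ∈ T.pathVerts p ∩ T.Ww, ¬ T.Colored x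

/-- `Q` is the system of traces on `T_w` of the paths of `P`. -/
def IsTraceSystem (P Q : Finset (Sym2 T.V)) : Prop :=
  (∀ q ∈ Q, ∃ p ∈ P, T.IsTraceOf q p) ∧
  (∀ p ∈ P, T.HasEmptyTrace p ∨ ∃ q ∈ Q, T.IsTraceOf q p)

/-- A path `p` of `T_w` is free if it can be extended to a path of `T` that
contains a grey leaf and has the same cost. -/
def IsFree (p : Sym2 T.V) : Prop :=
  ∃ p' : Sym2 T.V, (∀ x ∈ p', T.Colored x) ∧ T.pathVerts p ⊆ T.pathVerts p' ∧
    (∃ g ∈ T.pathVerts p', T.isGreyLeaf g) ∧ T.pathCost p' = T.pathCost p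

end WGTree


set_option linter.unusedSectionVars false

section TreeMetric

variable {V : Type} [DecidableEq V] {G : SimpleGraph V} (hT : G.IsTree)

lemma wgt_dcomm (u v : V) : G.dist u v = G.dist v u := SimpleGraph.dist_comm

lemma wgt_dist_self (u : V) : G.dist u u = 0 := SimpleGraph.dist_self

include hT

lemma wgt_tri (u v x : V) : G.dist u v ≤ G.dist u x + G.dist x v :=
  SimpleGraph.Connected.dist_triangle hT.isConnected

lemma wgt_split {u v x : V} (p : G.Walk u v) (hp : p.length = G.dist u v)
    (hx : x ∈ p.support) : G.dist u x + G.dist x v = G.dist u v := by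
  have h1 : G.dist u x ≤ (p.takeUntil x hx).length := SimpleGraph.dist_le _
  have h2 : G.dist x v ≤ (p.dropUntil x hx).length := SimpleGraph.dist_le _
  have h3 : (p.takeUntil x hx).length + (p.dropUntil x hx).length = p.length := by
    have := congrArg SimpleGraph.Walk.length (p.take_spec hx)
    rwa [SimpleGraph.Walk.length_append] at this
  have h4 := wgt_tri hT u v x
  omega

lemma wgt_geodesic (u v : V) : ∃ p : G.Walk u v, p.IsPath ∧ p.length = G.dist u v := by
  obtain ⟨p, hp⟩ := SimpleGraph.Connected.exists_walk_length_eq_dist hT.isConnected u v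
  refine ⟨p.bypass, p.bypass_isPath, le_antisymm ?_ (SimpleGraph.dist_le _)⟩
  exact hp ▸ p.length_bypass_le

lemma wgt_dist_eq_zero {u v : V} (h : G.dist u v = 0) : u = v :=
  (SimpleGraph.Connected.dist_eq_zero_iff hT.isConnected).mp h

lemma wgt_dist_pos {u v : V} (h : u ≠ v) : 1 ≤ G.dist u v :=
  Nat.one_le_iff_ne_zero.mpr (fun h0 => h (wgt_dist_eq_zero hT h0))

lemma wgt_dist_adj {u c : V} (h : G.Adj u c) : G.dist u c = 1 := by
  have h1 : G.dist u c ≤ 1 := by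
    simpa using SimpleGraph.dist_le (SimpleGraph.Walk.cons h SimpleGraph.Walk.nil)
  have h2 := wgt_dist_pos hT h.ne
  omega

lemma wgt_exists_step {u v : V} (h : u ≠ v) :
    ∃ c, G.Adj u c ∧ G.dist c v + 1 = G.dist u v := by
  obtain ⟨p, hp, hl⟩ := wgt_geodesic hT u v
  cases p with
  | nil => exact absurd rfl h
  | cons hadj q =>
    rename_i c
    refine ⟨c, hadj, ?_⟩
    have h1 : G.dist c v ≤ q.length := SimpleGraph.dist_le _
    have h2 : q.length + 1 = G.dist u v := by
      simpa [SimpleGraph.Walk.length_cons] using hl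
    have h3 := wgt_tri hT u v c
    have h4 := wgt_dist_adj hT hadj
    omega

lemma wgt_dichotomy {u c : V} (h : G.Adj u c) (x : V) :
    G.dist x c + 1 = G.dist x u ∨ G.dist x u + 1 = G.dist x c := by
  have hb1 : G.dist x c ≤ G.dist x u + 1 := by
    have := wgt_tri hT x c u
    have := wgt_dist_adj hT h
    have := wgt_dist_adj hT h.symm
    omega
  have hb2 : G.dist x u ≤ G.dist x c + 1 := by
    have := wgt_tri hT x u c
    have := wgt_dist_adj hT h
    have := wgt_dist_adj hT h.symm
    omega
  by_contra hne
  push_neg at hne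
  have heq : G.dist x u = G.dist x c := by omega
  obtain ⟨q, hq, hql⟩ := wgt_geodesic hT x u
  by_cases hc : c ∈ q.support
  · have := wgt_split hT q hql hc
    have hcu := wgt_dist_adj hT h.symm
    have := wgt_dist_pos hT h.ne.symm
    omega
  · have hpath : (q.concat h).IsPath := by
      rw [← SimpleGraph.Walk.isPath_reverse_iff, SimpleGraph.Walk.reverse_concat]
      rw [SimpleGraph.Walk.cons_isPath_iff]
      exact ⟨hq.reverse, by simpa using hc⟩
    obtain ⟨r, hr, hrl⟩ := wgt_geodesic hT x c
    have := (hT.existsUnique_path x c).unique hpath hr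
    have hlen := congrArg SimpleGraph.Walk.length this
    rw [SimpleGraph.Walk.length_concat, hql, hrl] at hlen
    omega

lemma wgt_step_unique {u c c' x : V} (h : G.Adj u c) (h' : G.Adj u c')
    (hd : G.dist x c + 1 = G.dist x u) (hd' : G.dist x c' + 1 = G.dist x u) : c = c' := by
  obtain ⟨q, hq, hql⟩ := wgt_geodesic hT x c
  obtain ⟨q', hq', hql'⟩ := wgt_geodesic hT x c'
  have hu : u ∉ q.support := by
    intro hu
    have := wgt_split hT q hql hu
    have := wgt_dist_adj hT h
    omega
  have hu' : u ∉ q'.support := by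
    intro hu
    have := wgt_split hT q' hql' hu
    have := wgt_dist_adj hT h'
    omega
  have hp1 : (q.concat h.symm).IsPath := by
    rw [← SimpleGraph.Walk.isPath_reverse_iff, SimpleGraph.Walk.reverse_concat]
    rw [SimpleGraph.Walk.cons_isPath_iff]
    exact ⟨hq.reverse, by simpa using hu⟩
  have hp2 : (q'.concat h'.symm).IsPath := by
    rw [← SimpleGraph.Walk.isPath_reverse_iff, SimpleGraph.Walk.reverse_concat]
    rw [SimpleGraph.Walk.cons_isPath_iff]
    exact ⟨hq'.reverse, by simpa using hu'⟩
  have := (hT.existsUnique_path x u).unique hp1 hp2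
  have hrev := congrArg SimpleGraph.Walk.reverse this
  rw [SimpleGraph.Walk.reverse_concat, SimpleGraph.Walk.reverse_concat] at hrev
  have := congrArg (fun w => SimpleGraph.Walk.getVert w 1) hrev
  simpa [SimpleGraph.Walk.getVert_cons_succ] using this

omit hT

open Classical in
noncomputable def gstep (G : SimpleGraph V) (u x : V) : V :=
  if h : ∃ c, G.Adj u c ∧ G.dist c x + 1 = G.dist u x then h.choose else u

include hT

lemma gstep_spec {u x : V} (h : u ≠ x) :
    G.Adj u (gstep G u x) ∧ G.dist (gstep G u x) x + 1 = G.dist u x := by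
  have he := wgt_exists_step hT h
  rw [gstep, dif_pos he]
  exact he.choose_spec

lemma gstep_eq {u x c : V} (hadj : G.Adj u c) (hd : G.dist c x + 1 = G.dist u x) :
    gstep G u x = c := by
  have hux : u ≠ x := by
    intro he; subst he
    have := wgt_dist_self (G := G) u
    omega
  obtain ⟨h1, h2⟩ := gstep_spec hT hux
  refine wgt_step_unique hT (x := x) h1 hadj ?_ ?_
  · have := wgt_dcomm (G := G) x (gstep G u x); have := wgt_dcomm (G := G) x u
    have := wgt_dcomm (G := G) (gstep G u x) x
    omega
  · have := wgt_dcomm (G := G) x c; have := wgt_dcomm (G := G) x u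
    have := wgt_dcomm (G := G) c x
    omega

lemma wgt_away_step : ∀ n u v x c, G.dist u v = n → G.Adj u c →
    G.dist c v + 1 = G.dist u v → G.dist x c = G.dist x u + 1 →
    G.dist x u + G.dist u v = G.dist x v := by
  intro n
  induction n using Nat.strong_induction_on with
  | _ n ih =>
    intro u v x c hn hadj hstep haway
    by_cases hcv : c = v
    · subst hcv
      have h1 := wgt_dist_adj hT hadj
      have h2 := wgt_dist_self (G := G) c
      omega
    · have hne : G.dist c v ≠ 0 := fun h0 => hcv (wgt_dist_eq_zero hT h0)
      obtain ⟨c', had', hst'⟩ := wgt_exists_step hT (show c ≠ v from hcv)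
      have hcu : c' ≠ u := by
        intro he; subst he
        have := wgt_dist_adj hT hadj
        omega
      have haway' : G.dist x c' = G.dist x c + 1 := by
        rcases wgt_dichotomy hT had' x with h | h
        · exact absurd (wgt_step_unique hT (x := x) had' hadj.symm h (by omega)) hcu
        · omega
      have hrec := ih (G.dist c v) (by omega) c v x c' rfl had' hst' haway'
      have h1 := wgt_dist_adj hT hadj
      omega

lemma wgt_median : ∀ n u v x, G.dist u v = n → ∃ m,
    G.dist u m + G.dist m v = G.dist u v ∧
    G.dist u m + G.dist m x = G.dist u x ∧
    G.dist v m + G.dist m x = G.dist v x := by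
  intro n
  induction n using Nat.strong_induction_on with
  | _ n ih =>
    intro u v x hn
    by_cases huv : u = v
    · subst huv
      exact ⟨u, by simp [wgt_dist_self (G := G)]⟩
    · obtain ⟨c, hadj, hstep⟩ := wgt_exists_step hT huv
      rcases wgt_dichotomy hT hadj x with hA | hB
      · obtain ⟨m, hm1, hm2, hm3⟩ := ih (G.dist c v) (by omega) c v x rfl
        have hadj1 := wgt_dist_adj hT hadj
        have htri2 := wgt_tri hT u v m
        have h5 := wgt_tri hT u m c
        have hcx := wgt_dcomm (G := G) x c
        have hcu := wgt_dcomm (G := G) x u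
        have hcm := wgt_dcomm (G := G) c x
        have hcu2 := wgt_dcomm (G := G) u x
        refine ⟨m, by omega, by omega, hm3⟩
      · have haux := wgt_away_step hT n u v x c hn hadj hstep (by
          have := wgt_dcomm (G := G) x c; have := wgt_dcomm (G := G) x u
          have := wgt_dcomm (G := G) c x; have := wgt_dcomm (G := G) u x
          omega)
        refine ⟨u, ?_, ?_, ?_⟩
        · simp [wgt_dist_self (G := G)]
        · simp [wgt_dist_self (G := G)]
        · have := wgt_dist_self (G := G) u
          have := wgt_dcomm (G := G) v u
          have := wgt_dcomm (G := G) v x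
          have := wgt_dcomm (G := G) x u
          have := wgt_dcomm (G := G) u v
          have := wgt_dcomm (G := G) x v
          omega

lemma wgt_step_of_between {v m x : V} (hm : m ≠ v)
    (hb : G.dist v m + G.dist m x = G.dist v x) : gstep G v x = gstep G v m := by
  obtain ⟨hadj, hst⟩ := gstep_spec hT (Ne.symm hm)
  set c := gstep G v m with hc
  have h1 := wgt_tri hT c x m
  have h2 := wgt_tri hT v x c
  have h3 : G.dist v c = 1 := wgt_dist_adj hT hadj
  exact gstep_eq hT hadj (by omega)

lemma wgt_between_of_step_ne {v x y : V} (hx : x ≠ v) (hy : y ≠ v)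
    (hne : gstep G v x ≠ gstep G v y) : G.dist x v + G.dist v y = G.dist x y := by
  obtain ⟨m, hm1, hm2, hm3⟩ := wgt_median hT (G.dist x y) x y v rfl
  by_cases hmv : m = v
  · subst hmv
    have := wgt_dcomm (G := G) x m; have := wgt_dcomm (G := G) m y
    omega
  · exfalso
    apply hne
    have e1 : gstep G v x = gstep G v m := wgt_step_of_between hT hmv (by
      have := wgt_dcomm (G := G) v m; have := wgt_dcomm (G := G) m v
      have := wgt_dcomm (G := G) v x; have := wgt_dcomm (G := G) x v
      have := wgt_dcomm (G := G) x m; have := wgt_dcomm (G := G) m x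
      omega)
    have e2 : gstep G v y = gstep G v m := wgt_step_of_between hT hmv (by
      have := wgt_dcomm (G := G) v m; have := wgt_dcomm (G := G) m v
      have := wgt_dcomm (G := G) v y; have := wgt_dcomm (G := G) y v
      have := wgt_dcomm (G := G) y m; have := wgt_dcomm (G := G) m y
      omega)
    rw [e1, e2]

lemma wgt_step_ne_of_between {v x y : V} (hb : G.dist x v + G.dist v y = G.dist x y)
    (hx : x ≠ v) (hy : y ≠ v) : gstep G v x ≠ gstep G v y := by
  intro he
  obtain ⟨hadjx, hstx⟩ := gstep_spec hT (Ne.symm hx)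
  obtain ⟨hadjy, hsty⟩ := gstep_spec hT (Ne.symm hy)
  rw [he] at hstx
  set c := gstep G v y
  have h1 := wgt_tri hT x y c
  have := wgt_dcomm (G := G) x c; have := wgt_dcomm (G := G) c x
  have := wgt_dcomm (G := G) x v; have := wgt_dcomm (G := G) v x
  omega

end TreeMetric

/-- a finset of even cardinality admits a fixed-point-free pairing -/
lemma exists_pairing {α : Type} [DecidableEq α] :
    ∀ n (S : Finset α), S.card = n → Even n →
    ∃ σ : α → α, ∀ x ∈ S, σ x ∈ S ∧ σ (σ x) = x ∧ σ x ≠ x := by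
  intro n
  induction n using Nat.strong_induction_on with
  | _ n ih =>
    intro S hcard heven
    rcases Nat.eq_zero_or_pos n with h0 | hpos
    · subst h0
      have : S = ∅ := Finset.card_eq_zero.mp hcard
      exact ⟨id, by simp [this]⟩
    · have h2 : 2 ≤ n := by
        rcases heven with ⟨k, hk⟩; omega
      have h1 : 1 < S.card := by omega
      obtain ⟨x, hx⟩ := Finset.card_pos.mp (by omega : 0 < S.card)
      obtain ⟨y, hy, hyx⟩ := Finset.exists_mem_ne h1 x
      set S' := (S.erase x).erase y with hS'
      have hcard' : S'.card = n - 2 := by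
        rw [hS', Finset.card_erase_of_mem (Finset.mem_erase.mpr ⟨hyx, hy⟩),
          Finset.card_erase_of_mem hx, hcard]
        omega
      have heven' : Even (n - 2) := by
        rcases heven with ⟨k, hk⟩; exact ⟨k - 1, by omega⟩
      obtain ⟨σ', hσ'⟩ := ih (n - 2) (by omega) S' hcard' heven'
      refine ⟨fun z => if z = x then y else if z = y then x else σ' z, ?_⟩
      intro z hz
      dsimp only
      by_cases hzx : z = x
      · rw [if_pos hzx, if_neg hyx, if_pos rfl]
        exact ⟨hy, hzx.symm, fun h => hyx (h.trans hzx)⟩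
      · by_cases hzy : z = y
        · rw [if_neg hzx, if_pos hzy, if_pos rfl]
          exact ⟨hx, hzy.symm, fun h => hzx h.symm⟩
        · have hzS' : z ∈ S' := by
            rw [hS']; exact Finset.mem_erase.mpr ⟨hzy, Finset.mem_erase.mpr ⟨hzx, hz⟩⟩
          obtain ⟨hm, hinv, hne⟩ := hσ' z hzS'
          have hmx : σ' z ≠ x := by
            intro he; rw [hS'] at hm; exact (Finset.mem_erase.mp (Finset.mem_erase.mp hm).2).1 he
          have hmy : σ' z ≠ y := by
            intro he; rw [hS'] at hm; exact (Finset.mem_erase.mp hm).1 he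
          rw [if_neg hzx, if_neg hzy, if_neg hmx, if_neg hmy]
          refine ⟨?_, hinv, hne⟩
          rw [hS'] at hm
          exact (Finset.mem_erase.mp (Finset.mem_erase.mp hm).2).2

section Deg

variable {V : Type} [DecidableEq V] [Fintype V] {G : SimpleGraph V} [DecidableRel G.Adj]
variable (hT : G.IsTree)
include hT

/-- in every direction from a vertex there is a leaf -/
lemma wgt_exists_leaf_beyond {v c : V} (hadj : G.Adj v c) :
    ∃ x, G.degree x = 1 ∧ G.dist v c + G.dist c x = G.dist v x := by
  classical
  set S : Finset V := univ.filter (fun x => G.dist v c + G.dist c x = G.dist v x) with hS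
  have hcS : c ∈ S := by
    simp [hS, wgt_dist_self (G := G)]
  obtain ⟨x, hxS, hmax⟩ := S.exists_max_image (fun x => G.dist v x) ⟨c, hcS⟩
  simp only [hS, mem_filter, mem_univ, true_and] at hxS
  refine ⟨x, ?_, hxS⟩
  have hvc := wgt_dist_adj hT hadj
  have hxv : x ≠ v := by
    intro he; subst he
    have := wgt_dist_self (G := G) x
    omega
  obtain ⟨hpadj, hpd⟩ := gstep_spec hT hxv
  set p := gstep G x v with hp
  have hpmem : p ∈ G.neighborFinset x := by
    rw [SimpleGraph.mem_neighborFinset]; exact hpadj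
  have hdegpos : 0 < G.degree x := by
    rw [← SimpleGraph.card_neighborFinset_eq_degree]
    exact Finset.card_pos.mpr ⟨p, hpmem⟩
  by_contra hdeg
  have hdeg2 : 1 < (G.neighborFinset x).card := by
    rw [SimpleGraph.card_neighborFinset_eq_degree]
    omega
  obtain ⟨y, hymem, hyp⟩ := Finset.exists_mem_ne hdeg2 p
  rw [SimpleGraph.mem_neighborFinset] at hymem
  have hxyd := wgt_dist_adj hT hymem
  have hvy : G.dist v y = G.dist v x + 1 := by
    rcases wgt_dichotomy hT hymem v with h | h
    · exfalso
      apply hyp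
      have : gstep G x v = y := gstep_eq hT hymem (by
        have := wgt_dcomm (G := G) v y; have := wgt_dcomm (G := G) v x
        have := wgt_dcomm (G := G) y v; have := wgt_dcomm (G := G) x v
        omega)
      rw [← this]
    · have := wgt_dcomm (G := G) v y; have := wgt_dcomm (G := G) v x
      omega
  have hyS : y ∈ S := by
    simp only [hS, mem_filter, mem_univ, true_and]
    have h1 := wgt_tri hT c y x
    have h2 := wgt_tri hT v y c
    omega
  have := hmax y hyS
  omega

/-- a leaf on a path is one of its endpoints -/
lemma wgt_leaf_between_endpoint {u v x : V} (hdeg : G.degree x = 1)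
    (hb : G.dist u x + G.dist x v = G.dist u v) : x = u ∨ x = v := by
  by_contra hne
  push_neg at hne
  obtain ⟨hxu, hxv⟩ := hne
  obtain ⟨hpadj, hpd⟩ := gstep_spec hT (u := x) (x := u) hxu
  obtain ⟨hqadj, hqd⟩ := gstep_spec hT (u := x) (x := v) hxv
  have hcard : (G.neighborFinset x).card = 1 := by
    rw [SimpleGraph.card_neighborFinset_eq_degree]; exact hdeg
  obtain ⟨e, he⟩ := Finset.card_eq_one.mp hcard
  have hpa : gstep G x u = e := by
    have : gstep G x u ∈ G.neighborFinset x := (SimpleGraph.mem_neighborFinset _ _ _).mpr hpadj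
    rw [he] at this; simpa using this
  have hqa : gstep G x v = e := by
    have : gstep G x v ∈ G.neighborFinset x := (SimpleGraph.mem_neighborFinset _ _ _).mpr hqadj
    rw [he] at this; simpa using this
  rw [hpa] at hpd
  rw [hqa] at hqd
  have h1 := wgt_tri hT u v e
  have := wgt_dcomm (G := G) u e; have := wgt_dcomm (G := G) e u
  have := wgt_dcomm (G := G) u x; have := wgt_dcomm (G := G) x u
  have h2 := wgt_dist_pos hT hxu
  have h3 := wgt_dist_pos hT hxv
  omega

end Deg

section WGHelpers

namespace WGTree

variable (T : WGTree)

lemma mem_pathVerts_iff {u v x : T.V} :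
    x ∈ T.pathVerts s(u, v) ↔ T.G.dist u x + T.G.dist x v = T.G.dist u v := by
  constructor
  · rintro ⟨u', v', heq, hb⟩
    have hb' : T.G.dist u' x + T.G.dist x v' = T.G.dist u' v' := hb
    rcases Sym2.eq_iff.mp heq with ⟨h1, h2⟩ | ⟨h1, h2⟩
    · subst h1; subst h2; exact hb'
    · subst h1; subst h2
      have := wgt_dcomm (G := T.G) u x
      have := wgt_dcomm (G := T.G) x u
      have := wgt_dcomm (G := T.G) v x
      have := wgt_dcomm (G := T.G) x v
      have := wgt_dcomm (G := T.G) u v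
      have := wgt_dcomm (G := T.G) v u
      omega
  · intro h
    exact ⟨u, v, rfl, h⟩

lemma pathCost_le_two (p : Sym2 T.V) : T.pathCost p ≤ 2 := by
  rw [WGTree.pathCost]
  split_ifs <;> omega

end WGTree

end WGHelpers

/-- **Example (correction to Bergeron et al.).** Let `T` be a white–grey tree with `w`
white leaves whose root has exactly two neighbors, one a grey leaf (so `g = 1`) and the
other a branching vertex. If `w` is odd and no white leaf of `T` is short, then
`cost(T) = w + ⌈g/2⌉ = w + 1`. -/
theorem cost_special_case (T : WGTree) (w : ℕ) (hw : w = T.whiteLeafCount)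
    (a b : T.V) (hab : a ≠ b)
    (hnbr : T.G.neighborSet T.root = {a, b})
    (ha : T.isGreyLeaf a) (hb : T.Branching b)
    (hodd : Odd w)
    (hshort : ∀ v : T.V, T.G.degree v = 1 → T.color v = WGColor.white →
      ¬ ∃ u : T.V, T.G.Adj v u ∧ 3 ≤ T.G.degree u) :
    T.greyLeafCount = 1 ∧ T.cost = w + 1 := by
  classical
  have hT := T.isTree
  have hadjra : T.G.Adj T.root a := by
    have : a ∈ T.G.neighborSet T.root := by rw [hnbr]; exact Set.mem_insert _ _
    exact this
  have hadjrb : T.G.Adj T.root b := by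
    have : b ∈ T.G.neighborSet T.root := by
      rw [hnbr]; exact Set.mem_insert_of_mem _ rfl
    exact this
  have hdega : T.G.degree a = 1 := ha.2
  have hbdeg : 3 ≤ T.G.degree b := hb
  have hnbr' : ∀ v, T.G.Adj T.root v → v = a ∨ v = b := by
    intro v hv
    have : v ∈ T.G.neighborSet T.root := hv
    rw [hnbr] at this
    exact this
  -- Part 1 : the only grey leaf is a
  have part1 : T.greyLeafCount = 1 := by
    rw [WGTree.greyLeafCount]
    rw [show (Finset.univ.filter fun v => T.isGreyLeaf v) = {a} from ?_]
    · exact Finset.card_singleton a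
    · ext v
      simp only [mem_filter, mem_univ, true_and, Finset.mem_singleton]
      constructor
      · rintro ⟨hc, hd⟩
        rcases hnbr' v (T.grey_adj_root v hc) with h | h
        · exact h
        · exfalso; rw [h] at hd; omega
      · rintro rfl; exact ha
  refine ⟨part1, ?_⟩
  -- leaf sets
  set WL : Finset T.V :=
    Finset.univ.filter (fun v => T.color v = WGColor.white ∧ T.G.degree v = 1) with hWL
  set Lf : Finset T.V := Finset.univ.filter (fun v => T.G.degree v = 1) with hLfdef
  have hwWL : w = WL.card := by
    rw [hw, WGTree.whiteLeafCount]
  have haWL : a ∉ WL := by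
    rw [hWL]
    simp only [mem_filter, mem_univ, true_and, not_and]
    intro hcol
    rw [ha.1] at hcol
    exact absurd hcol (by simp)
  have hLf : Lf = insert a WL := by
    ext v
    rw [hLfdef, hWL]
    simp only [mem_filter, mem_univ, true_and, Finset.mem_insert]
    constructor
    · intro hdeg
      by_cases hadj : T.G.Adj T.root v
      · rcases hnbr' v hadj with h | h
        · exact Or.inl h
        · exfalso; rw [h] at hdeg; omega
      · exact Or.inr ⟨T.leaf_white v hdeg hadj, hdeg⟩
    · rintro (rfl | ⟨_, hdeg⟩)
      · exact hdega
      · exact hdeg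
  have hLfcard : Lf.card = w + 1 := by
    rw [hLf, Finset.card_insert_of_notMem haWL, hwWL]
  have haLf : a ∈ Lf := by rw [hLf]; exact Finset.mem_insert_self _ _
  have hLfmem : ∀ v, v ∈ Lf ↔ T.G.degree v = 1 := by
    intro v; rw [hLfdef]; simp
  have hWLmem : ∀ v, v ∈ WL ↔ (T.color v = WGColor.white ∧ T.G.degree v = 1) := by
    intro v; rw [hWL]; simp
  have hLf_colored : ∀ v ∈ Lf, T.Colored v := by
    intro v hv
    rw [hLf, Finset.mem_insert] at hv
    rcases hv with rfl | hv
    · rw [WGTree.Colored, ha.1]; simp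
    · rw [hWLmem] at hv
      rw [WGTree.Colored, hv.1]; simp
  -- a leaf lying on a path is an endpoint of the path
  have leaf_mem : ∀ (l : T.V), T.G.degree l = 1 → ∀ p : Sym2 T.V,
      l ∈ T.pathVerts p → l ∈ p := by
    intro l hl p hmem
    obtain ⟨u, v, rfl, hb⟩ := hmem
    have hb' : T.G.dist u l + T.G.dist l v = T.G.dist u v := hb
    rcases wgt_leaf_between_endpoint hT hl hb' with h | h
    · rw [Sym2.mem_iff]; exact Or.inl h
    · rw [Sym2.mem_iff]; exact Or.inr h
  -- ===================== LOWER BOUND =====================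
  have lower : ∀ P : Finset (Sym2 T.V), T.IsCoverOn Set.univ P →
      w + 1 ≤ T.coverCost P := by
    intro P hP
    obtain ⟨hPsub, hPcol, hPcov⟩ := hP
    -- the path covering a
    have hacol : T.Colored a := hLf_colored a haLf
    obtain ⟨pa, hpaP, hpamem⟩ := hPcov a trivial hacol
    have hapa : a ∈ pa := leaf_mem a hdega pa hpamem
    -- choice of a covering path for each white leaf
    have hch : ∀ l ∈ WL, ∃ p, p ∈ P ∧ l ∈ p := by
      intro l hl
      rw [hWLmem] at hl
      have hcol : T.Colored l := by rw [WGTree.Colored, hl.1]; simp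
      obtain ⟨p, hpP, hpm⟩ := hPcov l trivial hcol
      exact ⟨p, hpP, leaf_mem l hl.2 p hpm⟩
    set f : T.V → Sym2 T.V :=
      fun l => if h : ∃ p, p ∈ P ∧ l ∈ p then h.choose else s(l, l) with hf
    have hfP : ∀ l ∈ WL, f l ∈ P ∧ l ∈ f l := by
      intro l hl
      have h := hch l hl
      rw [hf]; dsimp only
      rw [dif_pos h]
      exact h.choose_spec
    have hcount : WL.card = ∑ p ∈ P, (WL.filter (fun l => f l = p)).card :=
      Finset.card_eq_sum_card_fiberwise (fun l hl => (hfP l hl).1)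
    have hfiber : ∀ p ∈ P,
        (WL.filter (fun l => f l = p)).card ≤ (WL.filter (fun l => l ∈ p)).card := by
      intro p hp
      apply Finset.card_le_card
      intro l hl
      rw [Finset.mem_filter] at hl ⊢
      refine ⟨hl.1, ?_⟩
      have := (hfP l hl.1).2
      rwa [hl.2] at this
    -- each path costs at least the number of white leaves on it
    have hcost_ge : ∀ p : Sym2 T.V, (WL.filter (fun l => l ∈ p)).card ≤ T.pathCost p := by
      intro p
      induction p using Sym2.ind with
      | _ u v =>
        have hsub : WL.filter (fun l => l ∈ s(u, v)) ⊆ {u, v} := by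
          intro l hl
          rw [Finset.mem_filter, Sym2.mem_iff] at hl
          rcases hl.2 with rfl | rfl
          · exact Finset.mem_insert_self _ _
          · exact Finset.mem_insert_of_mem (Finset.mem_singleton_self _)
        have hcard2 : (WL.filter (fun l => l ∈ s(u, v))).card ≤ 2 := by
          refine le_trans (Finset.card_le_card hsub) ?_
          refine le_trans (Finset.card_insert_le _ _) ?_
          simp
        rw [WGTree.pathCost]
        split_ifs with h1 h2
        · have huv : u = v := by
            have := Sym2.mk_isDiag_iff.mp h1
            exact this
          subst huv
          have hsub1 : WL.filter (fun l => l ∈ s(u, u)) ⊆ {u} := by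
            intro l hl
            rw [Finset.mem_filter, Sym2.mem_iff] at hl
            rcases hl.2 with rfl | rfl <;> exact Finset.mem_singleton_self _
          have := Finset.card_le_card hsub1
          simpa using this
        · have hempty : WL.filter (fun l => l ∈ s(u, v)) = ∅ := by
            ext l
            simp only [Finset.mem_filter, Finset.notMem_empty, iff_false, not_and]
            intro hlWL hlmem
            have hgrey := h2 l hlmem
            rw [hWLmem] at hlWL
            rw [hlWL.1] at hgrey
            exact absurd hgrey (by simp)
          rw [hempty]
          simp
        · exact hcard2
    -- the path covering `a` costs one more than the white leaves on it
    have hcost_gea : (WL.filter (fun l => l ∈ pa)).card + 1 ≤ T.pathCost pa := by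
      revert hapa
      induction pa using Sym2.ind with
      | _ u v =>
        intro hapa
        rw [WGTree.pathCost]
        split_ifs with h1 h2
        · have huv : u = v := Sym2.mk_isDiag_iff.mp h1
          subst huv
          have hau : a = u := by
            rw [Sym2.mem_iff] at hapa; rcases hapa with h | h <;> exact h
          have hempty : WL.filter (fun l => l ∈ s(u, u)) = ∅ := by
            ext l
            simp only [Finset.mem_filter, Finset.notMem_empty, iff_false, not_and]
            intro hlWL hlmem
            rw [Sym2.mem_iff] at hlmem
            have hla : l = a := by rcases hlmem with rfl | rfl <;> exact hau.symm
            rw [hWLmem] at hlWL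
            rw [hla, ha.1] at hlWL
            exact absurd hlWL.1 (by simp)
          rw [hempty]
          simp
        · have hempty : WL.filter (fun l => l ∈ s(u, v)) = ∅ := by
            ext l
            simp only [Finset.mem_filter, Finset.notMem_empty, iff_false, not_and]
            intro hlWL hlmem
            have hgrey := h2 l hlmem
            rw [hWLmem] at hlWL
            rw [hlWL.1] at hgrey
            exact absurd hgrey (by simp)
          rw [hempty]
          simp
        · have hsub : WL.filter (fun l => l ∈ s(u, v)) ⊆ ({u, v} : Finset T.V).erase a := by
            intro l hl
            rw [Finset.mem_filter, Sym2.mem_iff] at hl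
            rw [Finset.mem_erase]
            have hla : l ≠ a := by
              intro he
              have := (hWLmem l).mp hl.1
              rw [he, ha.1] at this
              exact absurd this.1 (by simp)
            refine ⟨hla, ?_⟩
            rcases hl.2 with rfl | rfl
            · exact Finset.mem_insert_self _ _
            · exact Finset.mem_insert_of_mem (Finset.mem_singleton_self _)
          have h1 : (({u, v} : Finset T.V).erase a).card ≤ 1 := by
            have hael : a ∈ ({u, v} : Finset T.V) := by
              rw [Sym2.mem_iff] at hapa
              rcases hapa with rfl | rfl
              · exact Finset.mem_insert_self _ _
              · exact Finset.mem_insert_of_mem (Finset.mem_singleton_self _)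
            have := Finset.card_erase_of_mem hael
            have hc2 : ({u, v} : Finset T.V).card ≤ 2 := by
              refine le_trans (Finset.card_insert_le _ _) ?_
              simp
            omega
          have := le_trans (Finset.card_le_card hsub) h1
          omega
    -- put it together
    have e1 : ∑ p ∈ P.erase pa, T.pathCost p + T.pathCost pa = T.coverCost P := by
      rw [WGTree.coverCost]
      exact Finset.sum_erase_add P _ hpaP
    have e2 : ∑ p ∈ P.erase pa, (WL.filter (fun l => l ∈ p)).card ≤
        ∑ p ∈ P.erase pa, T.pathCost p :=
      Finset.sum_le_sum (fun p _ => hcost_ge p)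
    have e3 : ∑ p ∈ P.erase pa, (WL.filter (fun l => l ∈ p)).card
        + (WL.filter (fun l => l ∈ pa)).card
        = ∑ p ∈ P, (WL.filter (fun l => l ∈ p)).card :=
      Finset.sum_erase_add P _ hpaP
    have e4 : ∑ p ∈ P, (WL.filter (fun l => f l = p)).card ≤
        ∑ p ∈ P, (WL.filter (fun l => l ∈ p)).card :=
      Finset.sum_le_sum hfiber
    omega
  -- ===================== UPPER BOUND =====================
  have hevenLf : Even Lf.card := by
    rw [hLfcard]; exact hodd.add_one
  obtain ⟨σ0, hσ0⟩ := exists_pairing Lf.card Lf rfl hevenLf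
  set F : Finset (T.V → T.V) :=
    Finset.univ.filter (fun τ => ∀ x ∈ Lf, τ x ∈ Lf ∧ τ (τ x) = x ∧ τ x ≠ x) with hF
  have hσ0F : σ0 ∈ F := by
    rw [hF, Finset.mem_filter]; exact ⟨Finset.mem_univ _, hσ0⟩
  obtain ⟨σ, hσF, hmax⟩ :=
    F.exists_max_image (fun τ => ∑ x ∈ Lf, T.G.dist x (τ x)) ⟨σ0, hσ0F⟩
  have hval : ∀ x ∈ Lf, σ x ∈ Lf ∧ σ (σ x) = x ∧ σ x ≠ x := by
    rw [hF, Finset.mem_filter] at hσF; exact hσF.2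
  set P : Finset (Sym2 T.V) := Lf.image (fun x => s(x, σ x)) with hP
  have hcover : T.IsCoverOn Set.univ P := by
    refine ⟨fun p _ x _ => trivial, ?_, ?_⟩
    · intro p hp x hx
      rw [hP, Finset.mem_image] at hp
      obtain ⟨y, hy, rfl⟩ := hp
      rw [Sym2.mem_iff] at hx
      rcases hx with rfl | rfl
      · exact hLf_colored x hy
      · exact hLf_colored _ ((hval y hy).1)
    · intro z _ hcol
      by_cases hdeg : T.G.degree z = 1
      · have hzLf : z ∈ Lf := (hLfmem z).mpr hdeg
        refine ⟨s(z, σ z), Finset.mem_image_of_mem _ hzLf, ?_⟩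
        rw [T.mem_pathVerts_iff]
        rw [wgt_dist_self (G := T.G) z]
        omega
      · by_contra hnc
        push_neg at hnc
        have hzLf : z ∉ Lf := by rw [hLfmem]; exact hdeg
        have hza : z ≠ a := by rintro rfl; exact hdeg hdega
        have hdegpos : 0 < T.G.degree z := by
          obtain ⟨c, hc, _⟩ := wgt_exists_step hT hza
          rw [← SimpleGraph.card_neighborFinset_eq_degree]
          exact Finset.card_pos.mpr ⟨c, (SimpleGraph.mem_neighborFinset _ _ _).mpr hc⟩
        have hdeg2 : 1 < (T.G.neighborFinset z).card := by
          rw [SimpleGraph.card_neighborFinset_eq_degree]; omega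
        obtain ⟨c1, hc1m, c2, hc2m, hc12⟩ := Finset.one_lt_card.mp hdeg2
        rw [SimpleGraph.mem_neighborFinset] at hc1m hc2m
        obtain ⟨x1, hx1deg, hx1b⟩ := wgt_exists_leaf_beyond hT hc1m
        obtain ⟨x2, hx2deg, hx2b⟩ := wgt_exists_leaf_beyond hT hc2m
        have hx1Lf : x1 ∈ Lf := (hLfmem x1).mpr hx1deg
        have hx2Lf : x2 ∈ Lf := (hLfmem x2).mpr hx2deg
        have hstep1 : gstep T.G z x1 = c1 := by
          refine gstep_eq hT hc1m ?_
          have := wgt_dist_adj hT hc1m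
          omega
        have hstep2 : gstep T.G z x2 = c2 := by
          refine gstep_eq hT hc2m ?_
          have := wgt_dist_adj hT hc2m
          omega
        have hnb : ∀ x ∈ Lf,
            ¬ (T.G.dist x z + T.G.dist z (σ x) = T.G.dist x (σ x)) := by
          intro x hx hbet
          exact hnc s(x, σ x) (Finset.mem_image_of_mem _ hx)
            ((T.mem_pathVerts_iff).mpr hbet)
        have hxne : ∀ x ∈ Lf, x ≠ z := fun x hx he => hzLf (he ▸ hx)
        have hstep_eq : ∀ x ∈ Lf, gstep T.G z x = gstep T.G z (σ x) := by
          intro x hx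
          by_contra hne
          exact hnb x hx
            (wgt_between_of_step_ne hT (hxne x hx) (hxne _ (hval x hx).1) hne)
        set s1 := σ x1 with hs1def
        set s2 := σ x2 with hs2def
        have hs1Lf : s1 ∈ Lf := (hval x1 hx1Lf).1
        have hs2Lf : s2 ∈ Lf := (hval x2 hx2Lf).1
        have hgs1 : gstep T.G z s1 = c1 := by
          rw [← hstep_eq x1 hx1Lf, hstep1]
        have hgs2 : gstep T.G z s2 = c2 := by
          rw [← hstep_eq x2 hx2Lf, hstep2]
        have hinv1 : σ s1 = x1 := (hval x1 hx1Lf).2.1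
        have hinv2 : σ s2 = x2 := (hval x2 hx2Lf).2.1
        have h12 : x1 ≠ x2 := by
          intro he; rw [he, hstep2] at hstep1; exact hc12 hstep1.symm
        have hs1x1 : s1 ≠ x1 := (hval x1 hx1Lf).2.2
        have hs2x2 : s2 ≠ x2 := (hval x2 hx2Lf).2.2
        have hs1x2 : s1 ≠ x2 := by
          intro he; rw [he, hstep2] at hgs1; exact hc12 hgs1.symm
        have hs2x1 : s2 ≠ x1 := by
          intro he; rw [he, hstep1] at hgs2; exact hc12 hgs2
        have hs12 : s1 ≠ s2 := by
          intro he
          apply h12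
          rw [← hinv1, ← hinv2, he]
        set σ' : T.V → T.V := fun t =>
          if t = x1 then x2 else if t = x2 then x1 else
          if t = s1 then s2 else if t = s2 then s1 else σ t with hσ'def
        have hev : ∀ t, σ' t =
            (if t = x1 then x2 else if t = x2 then x1 else
             if t = s1 then s2 else if t = s2 then s1 else σ t) := fun t => rfl
        have hσ'x1 : σ' x1 = x2 := by rw [hev, if_pos rfl]
        have hσ'x2 : σ' x2 = x1 := by
          rw [hev, if_neg (fun h => h12 h.symm), if_pos rfl]
        have hσ's1 : σ' s1 = s2 := by
          rw [hev, if_neg hs1x1, if_neg hs1x2, if_pos rfl]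
        have hσ's2 : σ' s2 = s1 := by
          rw [hev, if_neg hs2x1, if_neg hs2x2, if_neg hs12.symm, if_pos rfl]
        have hσ'other : ∀ t, t ≠ x1 → t ≠ x2 → t ≠ s1 → t ≠ s2 → σ' t = σ t := by
          intro t h1 h2 h3 h4
          rw [hev, if_neg h1, if_neg h2, if_neg h3, if_neg h4]
        have hvalσ' : ∀ x ∈ Lf, σ' x ∈ Lf ∧ σ' (σ' x) = x ∧ σ' x ≠ x := by
          intro t ht
          by_cases e1 : t = x1
          · subst e1
            rw [hσ'x1, hσ'x2]
            exact ⟨hx2Lf, rfl, fun h => h12 h.symm⟩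
          · by_cases e2 : t = x2
            · subst e2
              rw [hσ'x2, hσ'x1]
              exact ⟨hx1Lf, rfl, h12⟩
            · by_cases e3 : t = s1
              · subst e3
                rw [hσ's1, hσ's2]
                exact ⟨hs2Lf, rfl, hs12.symm⟩
              · by_cases e4 : t = s2
                · subst e4
                  rw [hσ's2, hσ's1]
                  exact ⟨hs1Lf, rfl, hs12⟩
                · obtain ⟨hm, hiv, hne⟩ := hval t ht
                  have g1 : σ t ≠ x1 := by
                    intro h; apply e3; rw [← hiv, h, hs1def, ← hinv1]
                  have g2 : σ t ≠ x2 := by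
                    intro h; apply e4; rw [← hiv, h, hs2def, ← hinv2]
                  have g3 : σ t ≠ s1 := by
                    intro h
                    apply e1
                    rw [← hiv, h, hinv1]
                  have g4 : σ t ≠ s2 := by
                    intro h
                    apply e2
                    rw [← hiv, h, hinv2]
                  rw [hσ'other t e1 e2 e3 e4, hσ'other (σ t) g1 g2 g3 g4]
                  exact ⟨hm, hiv, hne⟩
        have hσ'F : σ' ∈ F := by
          rw [hF, Finset.mem_filter]; exact ⟨Finset.mem_univ _, hvalσ'⟩
        set A : Finset T.V := insert x1 (insert x2 (insert s1 {s2})) with hA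
        have hAsub : A ⊆ Lf := by
          intro t ht
          rw [hA] at ht
          simp only [Finset.mem_insert, Finset.mem_singleton] at ht
          rcases ht with rfl | rfl | rfl | rfl
          · exact hx1Lf
          · exact hx2Lf
          · exact hs1Lf
          · exact hs2Lf
        have hw1 : (∑ x ∈ Lf \ A, T.G.dist x (σ x)) + ∑ x ∈ A, T.G.dist x (σ x)
            = ∑ x ∈ Lf, T.G.dist x (σ x) := Finset.sum_sdiff hAsub
        have hw2 : (∑ x ∈ Lf \ A, T.G.dist x (σ' x)) + ∑ x ∈ A, T.G.dist x (σ' x)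
            = ∑ x ∈ Lf, T.G.dist x (σ' x) := Finset.sum_sdiff hAsub
        have houter : ∑ x ∈ Lf \ A, T.G.dist x (σ' x)
            = ∑ x ∈ Lf \ A, T.G.dist x (σ x) := by
          refine Finset.sum_congr rfl ?_
          intro t ht
          rw [Finset.mem_sdiff, hA] at ht
          simp only [Finset.mem_insert, Finset.mem_singleton, not_or] at ht
          obtain ⟨-, ht1, ht2, ht3, ht4⟩ := ht
          rw [hσ'other t ht1 ht2 ht3 ht4]
        have hm1 : x1 ∉ (insert x2 (insert s1 ({s2} : Finset T.V))) := by
          simp only [Finset.mem_insert, Finset.mem_singleton, not_or]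
          exact ⟨h12, fun h => hs1x1 h.symm, fun h => hs2x1 h.symm⟩
        have hm2 : x2 ∉ (insert s1 ({s2} : Finset T.V)) := by
          simp only [Finset.mem_insert, Finset.mem_singleton, not_or]
          exact ⟨fun h => hs1x2 h.symm, fun h => hs2x2 h.symm⟩
        have hm3 : s1 ∉ ({s2} : Finset T.V) := by
          simp only [Finset.mem_singleton]; exact hs12
        have hsA : ∑ x ∈ A, T.G.dist x (σ x)
            = T.G.dist x1 s1 + (T.G.dist x2 s2
              + (T.G.dist s1 x1 + T.G.dist s2 x2)) := by
          rw [hA, Finset.sum_insert hm1, Finset.sum_insert hm2,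
            Finset.sum_insert hm3, Finset.sum_singleton, hinv1, hinv2]
        have hsA' : ∑ x ∈ A, T.G.dist x (σ' x)
            = T.G.dist x1 x2 + (T.G.dist x2 x1
              + (T.G.dist s1 s2 + T.G.dist s2 s1)) := by
          rw [hA, Finset.sum_insert hm1, Finset.sum_insert hm2,
            Finset.sum_insert hm3, Finset.sum_singleton,
            hσ'x1, hσ'x2, hσ's1, hσ's2]
        have hb12 : T.G.dist x1 z + T.G.dist z x2 = T.G.dist x1 x2 := by
          refine wgt_between_of_step_ne hT (hxne x1 hx1Lf) (hxne x2 hx2Lf) ?_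
          rw [hstep1, hstep2]; exact hc12
        have hbss : T.G.dist s1 z + T.G.dist z s2 = T.G.dist s1 s2 := by
          refine wgt_between_of_step_ne hT (hxne s1 hs1Lf) (hxne s2 hs2Lf) ?_
          rw [hgs1, hgs2]; exact hc12
        have hnb1 : ¬ (T.G.dist x1 z + T.G.dist z s1 = T.G.dist x1 s1) := hnb x1 hx1Lf
        have htri1 := wgt_tri hT x1 s1 z
        have htri2 := wgt_tri hT x2 s2 z
        have hcm1 := wgt_dcomm (G := T.G) x2 x1
        have hcm2 := wgt_dcomm (G := T.G) s2 s1
        have hcm3 := wgt_dcomm (G := T.G) s1 x1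
        have hcm4 := wgt_dcomm (G := T.G) s2 x2
        have hcm5 := wgt_dcomm (G := T.G) z x2
        have hcm6 := wgt_dcomm (G := T.G) s1 z
        have hcm7 := wgt_dcomm (G := T.G) z s1
        have hcm8 := wgt_dcomm (G := T.G) x2 z
        have hcm9 := wgt_dcomm (G := T.G) z s2
        have hle : (∑ x ∈ Lf, T.G.dist x (σ' x)) ≤ ∑ x ∈ Lf, T.G.dist x (σ x) :=
          hmax σ' hσ'F
        omega
  -- cost of the constructed cover
  have hPcard : 2 * P.card ≤ Lf.card := by
    have hmapsto : ∀ x ∈ Lf, s(x, σ x) ∈ P := fun x hx => Finset.mem_image_of_mem _ hx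
    have hcount := Finset.card_eq_sum_card_fiberwise hmapsto
    have h2le : ∀ p ∈ P, 2 ≤ (Lf.filter (fun x => s(x, σ x) = p)).card := by
      intro p hp
      rw [hP, Finset.mem_image] at hp
      obtain ⟨x, hx, rfl⟩ := hp
      have hx1 : x ∈ Lf.filter (fun y => s(y, σ y) = s(x, σ x)) :=
        Finset.mem_filter.mpr ⟨hx, rfl⟩
      have hx2 : σ x ∈ Lf.filter (fun y => s(y, σ y) = s(x, σ x)) := by
        refine Finset.mem_filter.mpr ⟨(hval x hx).1, ?_⟩
        rw [(hval x hx).2.1, Sym2.eq_swap]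
      exact Finset.one_lt_card.mpr ⟨x, hx1, σ x, hx2, Ne.symm (hval x hx).2.2⟩
    calc 2 * P.card = ∑ _p ∈ P, 2 := by
          rw [Finset.sum_const, smul_eq_mul, mul_comm]
      _ ≤ ∑ p ∈ P, (Lf.filter (fun x => s(x, σ x) = p)).card :=
          Finset.sum_le_sum h2le
      _ = Lf.card := hcount.symm
  have hcost : T.coverCost P ≤ w + 1 := by
    rw [WGTree.coverCost]
    calc ∑ p ∈ P, T.pathCost p ≤ ∑ _p ∈ P, 2 :=
          Finset.sum_le_sum (fun p _ => T.pathCost_le_two p)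
      _ = 2 * P.card := by rw [Finset.sum_const, smul_eq_mul, mul_comm]
      _ ≤ Lf.card := hPcard
      _ = w + 1 := hLfcard
  -- conclusion
  have hmemS : T.coverCost P ∈
      {c : ℕ | ∃ Q : Finset (Sym2 T.V), T.IsCoverOn Set.univ Q ∧ T.coverCost Q = c} :=
    ⟨P, hcover, rfl⟩
  rw [WGTree.cost, WGTree.costOn]
  apply le_antisymm
  · exact le_trans (Nat.sInf_le hmemS) hcost
  · refine le_csInf ⟨_, hmemS⟩ ?_
    rintro c ⟨Q, hQ, rfl⟩
    exact lower Q hQ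
end
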